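/- arXiv:2506.04197 — 8 statements merged into one kernel-verified Lean document; each statement's English description precedes it below -/
import Mathlib

section
/- Let S ⊆ M_d be a finite set, let Φ : M_d → M_d be a unital completely positive map, and let E : M_d → M_d be a Hermitian-preserving linear map (E(x)* = E(x*) for all x) such that Φ ∘ E = E. Then Cost_S(Φ) ≤ Cost_S(E) · ‖Φ − id‖_{sa}, where ‖Φ − id‖_{sa} := sup{ ‖Φ(y) − y‖ : y = y* ∈ M_d, ‖y‖ ≤ 1 } and the inequality is in [0,∞]. -/
open scoped ENNReal NNReal ComplexOrder Matrix Matrix.Norms.L2Operator Kronecker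

noncomputable section

/-- The amplification `id_{M_n} ⊗ Φ` of a map on matrices, acting blockwise. -/
def ampFun {ι : Type*} (Φ : Matrix ι ι ℂ → Matrix ι ι ℂ) (n : ℕ)
    (X : Matrix (Fin n × ι) (Fin n × ι) ℂ) : Matrix (Fin n × ι) (Fin n × ι) ℂ :=
  Matrix.of fun p q => Φ (Matrix.of fun k l => X (p.1, k) (q.1, l)) p.2 q.2

/-- A unital completely positive map on `Matrix ι ι ℂ`: a linear map sending `1` to `1`
all of whose amplifications preserve positive semidefiniteness. -/
structure IsUCP {ι : Type*} [Fintype ι] [DecidableEq ι]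
    (Φ : Matrix ι ι ℂ → Matrix ι ι ℂ) : Prop where
  map_add : ∀ x y, Φ (x + y) = Φ x + Φ y
  map_smul : ∀ (c : ℂ) (x), Φ (c • x) = c • Φ x
  unital : Φ 1 = 1
  cp : ∀ (n : ℕ) (X : Matrix (Fin n × ι) (Fin n × ι) ℂ),
    X.PosSemidef → (ampFun Φ n X).PosSemidef

/-- Transportation cost of a map `Φ` w.r.t. a seminorm `L`, valued in `[0,∞]`. -/
def Cost {ι : Type*} [Fintype ι] [DecidableEq ι] (L : Matrix ι ι ℂ → ℝ)
    (Φ : Matrix ι ι ℂ → Matrix ι ι ℂ) : ℝ≥0∞ :=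
  ⨆ x ∈ {x : Matrix ι ι ℂ | x.IsHermitian ∧ L x ≤ 1}, ENNReal.ofReal ‖Φ x - x‖

/-- Lipschitz constant of a map `Φ` w.r.t. a seminorm `L`, valued in `[0,∞]`. -/
def Lip {ι : Type*} [Fintype ι] [DecidableEq ι] (L : Matrix ι ι ℂ → ℝ)
    (Φ : Matrix ι ι ℂ → Matrix ι ι ℂ) : ℝ≥0∞ :=
  ⨆ x ∈ {x : Matrix ι ι ℂ | x.IsHermitian ∧ L x ≤ 1}, ENNReal.ofReal (L (Φ x))

/-- Commutator seminorm `|||x|||_S = max_{s ∈ S} ‖s*x - x*s‖` (operator norm). -/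
def cnorm {ι : Type*} [Fintype ι] [DecidableEq ι] (S : Finset (Matrix ι ι ℂ))
    (x : Matrix ι ι ℂ) : ℝ :=
  ((S.sup fun s => ‖s * x - x * s‖₊ : ℝ≥0) : ℝ)

/-- Amplified commutator seminorm `|||X|||_{S,n} = max_{s∈S} ‖(1ₙ⊗s)X - X(1ₙ⊗s)‖` on
`M_n ⊗ M_ι`. -/
def cnormAmp {ι : Type*} [Fintype ι] [DecidableEq ι] (S : Finset (Matrix ι ι ℂ)) (n : ℕ)
    (X : Matrix (Fin n × ι) (Fin n × ι) ℂ) : ℝ :=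
  ((S.sup fun s => ‖((1 : Matrix (Fin n) (Fin n) ℂ) ⊗ₖ s) * X
      - X * ((1 : Matrix (Fin n) (Fin n) ℂ) ⊗ₖ s)‖₊ : ℝ≥0) : ℝ)

/-- Complete transportation cost w.r.t. the commutator seminorms of `S`. -/
def Costcb {ι : Type*} [Fintype ι] [DecidableEq ι] (S : Finset (Matrix ι ι ℂ))
    (Φ : Matrix ι ι ℂ → Matrix ι ι ℂ) : ℝ≥0∞ :=
  ⨆ (n : ℕ), ⨆ X ∈ {X : Matrix (Fin n × ι) (Fin n × ι) ℂ |
      X.IsHermitian ∧ cnormAmp S n X ≤ 1}, ENNReal.ofReal ‖ampFun Φ n X - X‖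

/-- Complete Lipschitz constant w.r.t. the commutator seminorms of `S`. -/
def Lipcb {ι : Type*} [Fintype ι] [DecidableEq ι] (S : Finset (Matrix ι ι ℂ))
    (Φ : Matrix ι ι ℂ → Matrix ι ι ℂ) : ℝ≥0∞ :=
  ⨆ (n : ℕ), ⨆ X ∈ {X : Matrix (Fin n × ι) (Fin n × ι) ℂ |
      X.IsHermitian ∧ cnormAmp S n X ≤ 1}, ENNReal.ofReal (cnormAmp S n (ampFun Φ n X))

/-- The norm `‖Θ - id‖_{sa} = sup { ‖Θ y - y‖ : y = y*, ‖y‖ ≤ 1 }`, valued in `[0,∞]`. -/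
def saDistId {ι : Type*} [Fintype ι] [DecidableEq ι]
    (Θ : Matrix ι ι ℂ → Matrix ι ι ℂ) : ℝ≥0∞ :=
  ⨆ y ∈ {y : Matrix ι ι ℂ | y.IsHermitian ∧ ‖y‖ ≤ 1}, ENNReal.ofReal ‖Θ y - y‖

/-- Universal upper bound: if `Φ` is UCP, `E` is Hermitian-preserving and
`Φ ∘ E = E`, then `Cost_S(Φ) ≤ Cost_S(E) · ‖Φ - id‖_{sa}`. -/
theorem cost_le_cost_conditional_expectation_mul {d : ℕ}
    (S : Finset (Matrix (Fin d) (Fin d) ℂ))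
    (Φ E : Matrix (Fin d) (Fin d) ℂ → Matrix (Fin d) (Fin d) ℂ)
    (hΦ : IsUCP Φ)
    (hE_lin : ∀ (c : ℂ) (x y), E (c • x + y) = c • E x + E y)
    (hE_herm : ∀ x, (E x)ᴴ = E xᴴ)
    (hΦE : ∀ x, Φ (E x) = E x) :
    Cost (cnorm S) Φ ≤ Cost (cnorm S) E * saDistId Φ := by
  have hΦ0 : Φ 0 = 0 := by
    have := hΦ.map_smul 0 0
    simpa using this
  have hΦsub : ∀ a b, Φ (a - b) = Φ a - Φ b := by
    intro a b
    have : Φ (a + (-1 : ℂ) • b) = Φ a + (-1 : ℂ) • Φ b := by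
      rw [hΦ.map_add, hΦ.map_smul]
    simpa [sub_eq_add_neg, neg_one_smul] using this
  refine iSup₂_le fun x hx => ?_
  obtain ⟨hxh, hxc⟩ := hx
  set y : Matrix (Fin d) (Fin d) ℂ := E x - x with hy
  have hyh : y.IsHermitian := by
    have : (E x - x)ᴴ = E x - x := by
      rw [Matrix.conjTranspose_sub, hE_herm, hxh.eq]
    exact this
  have hkey : Φ x - x = -(Φ y - y) := by
    have : Φ y = Φ (E x) - Φ x := hΦsub _ _
    rw [this, hΦE, hy]
    abel
  -- step 1 : ofReal ‖y‖ ≤ Cost (cnorm S) E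
  have h1 : ENNReal.ofReal ‖y‖ ≤ Cost (cnorm S) E := by
    refine le_iSup₂_of_le x ⟨hxh, hxc⟩ ?_
    exact le_of_eq rfl
  -- step 2 : ofReal ‖Φ y - y‖ ≤ ofReal ‖y‖ * saDistId Φ
  have h2 : ENNReal.ofReal ‖Φ y - y‖ ≤ ENNReal.ofReal ‖y‖ * saDistId Φ := by
    by_cases hy0 : y = 0
    · simp [hy0, hΦ0]
    · have hr : (0 : ℝ) < ‖y‖ := norm_pos_iff.mpr hy0
      set z : Matrix (Fin d) (Fin d) ℂ := ((‖y‖⁻¹ : ℝ) : ℂ) • y with hz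
      have hzh : z.IsHermitian := by
        have : zᴴ = z := by
          rw [hz, Matrix.conjTranspose_smul, hyh.eq]
          norm_num
        exact this
      have hzn : ‖z‖ ≤ 1 := by
        rw [hz, norm_smul]
        simp only [Complex.norm_real, Real.norm_eq_abs, abs_of_pos (inv_pos.mpr hr)]
        rw [inv_mul_cancel₀ hr.ne']
      have hyz : y = ((‖y‖ : ℝ) : ℂ) • z := by
        rw [hz, smul_smul]
        rw [show ((‖y‖ : ℝ) : ℂ) * ((‖y‖⁻¹ : ℝ) : ℂ) = 1 by
          rw [← Complex.ofReal_mul, mul_inv_cancel₀ hr.ne']; norm_num]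
        simp
      have hnorm : ‖Φ y - y‖ = ‖y‖ * ‖Φ z - z‖ := by
        conv_lhs => rw [hyz, hΦ.map_smul, ← smul_sub]
        rw [norm_smul]
        simp [abs_of_pos hr]
      rw [hnorm, ENNReal.ofReal_mul hr.le]
      refine mul_le_mul_right ?_ _
      exact le_iSup₂_of_le z ⟨hzh, hzn⟩ le_rfl
  calc ENNReal.ofReal ‖Φ x - x‖ = ENNReal.ofReal ‖Φ y - y‖ := by
        rw [hkey, norm_neg]
    _ ≤ ENNReal.ofReal ‖y‖ * saDistId Φ := h2
    _ ≤ Cost (cnorm S) E * saDistId Φ := mul_le_mul_left h1 _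

end
end

section
/- Let S ⊆ M_d be a finite set, let Φ : M_d → M_d be a unital completely positive map, and let E : M_d → M_d be a Hermitian-preserving linear map whose range commutes with every element of S (i.e. s·E(x) = E(x)·s for all s ∈ S, x ∈ M_d), such that Φ ∘ E = E. Then Lip_S(Φ) ≤ 2 · (max_{s∈S} ‖s‖) · Cost_S(E), where Lip_S and Cost_S are taken with respect to the commutator seminorm |||·|||_S and the inequality is in [0,∞]. -/
open scoped ENNReal NNReal ComplexOrder Matrix Matrix.Norms.L2Operator Kronecker

noncomputable section

section Aux

open Matrix ContinuousLinearMap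

variable {d : ℕ}

private lemma isHermitian_iff_isSelfAdjoint_clm (M : Matrix (Fin d) (Fin d) ℂ) :
    M.IsHermitian ↔ IsSelfAdjoint (Matrix.toEuclideanCLM (𝕜 := ℂ) M) := by
  rw [Matrix.IsHermitian, ← Matrix.star_eq_conjTranspose, isSelfAdjoint_iff, ← map_star]
  exact ⟨fun h => by rw [h], fun h => (Matrix.toEuclideanCLM (𝕜 := ℂ)
    (n := Fin d)).injective h⟩

private lemma posSemidef_iff_nonneg_clm (M : Matrix (Fin d) (Fin d) ℂ) :
    M.PosSemidef ↔ 0 ≤ Matrix.toEuclideanCLM (𝕜 := ℂ) M := by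
  rw [ContinuousLinearMap.nonneg_iff_isPositive,
    ← ContinuousLinearMap.isPositive_toLinearMap_iff,
    Matrix.coe_toEuclideanCLM_eq_toEuclideanLin, Matrix.isPositive_toEuclideanLin_iff]

private lemma ucp_posSemidef {Φ : Matrix (Fin d) (Fin d) ℂ → Matrix (Fin d) (Fin d) ℂ}
    (hΦ : IsUCP Φ) {y : Matrix (Fin d) (Fin d) ℂ} (hy : y.PosSemidef) :
    (Φ y).PosSemidef := by
  have hX : (y.submatrix (Prod.snd : Fin 1 × Fin d → Fin d) Prod.snd).PosSemidef :=
    hy.submatrix _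
  have h := hΦ.cp 1 _ hX
  have heq : Φ y = (ampFun Φ 1 (y.submatrix Prod.snd Prod.snd)).submatrix
      (fun i => ((0 : Fin 1), i)) (fun i => ((0 : Fin 1), i)) := rfl
  rw [heq]
  exact h.submatrix _

private lemma herm_norm_smul_one_sub_posSemidef {a : Matrix (Fin d) (Fin d) ℂ}
    (ha : a.IsHermitian) : (((‖a‖ : ℝ) : ℂ) • 1 - a).PosSemidef := by
  rw [posSemidef_iff_nonneg_clm, map_sub, _root_.map_smul, _root_.map_one, sub_nonneg]
  have hT : IsSelfAdjoint (Matrix.toEuclideanCLM (𝕜 := ℂ) a) :=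
    (isHermitian_iff_isSelfAdjoint_clm a).mp ha
  have h1 : ((‖a‖ : ℂ) • (1 : EuclideanSpace ℂ (Fin d) →L[ℂ] EuclideanSpace ℂ (Fin d)))
      = algebraMap ℝ _ ‖a‖ := by
    rw [Algebra.algebraMap_eq_smul_one]
    exact Complex.coe_smul ‖a‖ (1 : EuclideanSpace ℂ (Fin d) →L[ℂ] EuclideanSpace ℂ (Fin d))
  rw [h1, Matrix.cstar_norm_def (𝕜 := ℂ) a]
  exact hT.le_algebraMap_norm_self

private lemma ucp_norm_le {Φ : Matrix (Fin d) (Fin d) ℂ → Matrix (Fin d) (Fin d) ℂ}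
    (hΦ : IsUCP Φ) {z : Matrix (Fin d) (Fin d) ℂ} (hz : z.IsHermitian) :
    ‖Φ z‖ ≤ ‖z‖ := by
  have hsub : ∀ a b, Φ (a - b) = Φ a - Φ b := by
    intro a b
    have h1 : a - b = a + (-1 : ℂ) • b := by rw [neg_one_smul, ← sub_eq_add_neg]
    rw [h1, hΦ.map_add, hΦ.map_smul, neg_one_smul, ← sub_eq_add_neg]
  set c : ℝ := ‖z‖ with hc
  -- the two positivity facts
  have h1 : (((c : ℝ) : ℂ) • 1 - z).PosSemidef := herm_norm_smul_one_sub_posSemidef hz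
  have h2 : (((c : ℝ) : ℂ) • 1 + z).PosSemidef := by
    have := herm_norm_smul_one_sub_posSemidef (a := -z) (by
      rw [Matrix.IsHermitian, Matrix.conjTranspose_neg, hz.eq])
    rw [norm_neg, sub_neg_eq_add] at this
    exact this
  -- push through Φ
  have h1' : (((c : ℝ) : ℂ) • 1 - Φ z).PosSemidef := by
    have := ucp_posSemidef hΦ h1
    rwa [hsub, hΦ.map_smul, hΦ.unital] at this
  have h2' : (((c : ℝ) : ℂ) • 1 + Φ z).PosSemidef := by
    have := ucp_posSemidef hΦ h2
    rwa [hΦ.map_add, hΦ.map_smul, hΦ.unital] at this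
  -- go to CLM world
  have hsmul1 : ((c : ℂ) • (1 : EuclideanSpace ℂ (Fin d) →L[ℂ] EuclideanSpace ℂ (Fin d)))
      = algebraMap ℝ _ c := by
    rw [Algebra.algebraMap_eq_smul_one]
    exact Complex.coe_smul c (1 : EuclideanSpace ℂ (Fin d) →L[ℂ] EuclideanSpace ℂ (Fin d))
  have h1'' : Matrix.toEuclideanCLM (𝕜 := ℂ) (Φ z) ≤ algebraMap ℝ _ c := by
    have := (posSemidef_iff_nonneg_clm _).mp h1'
    rw [map_sub, _root_.map_smul, _root_.map_one, hsmul1, sub_nonneg] at this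
    exact this
  have h2'' : algebraMap ℝ _ (-c) ≤ Matrix.toEuclideanCLM (𝕜 := ℂ) (Φ z) := by
    have := (posSemidef_iff_nonneg_clm _).mp h2'
    rw [map_add, _root_.map_smul, _root_.map_one, hsmul1] at this
    rw [map_neg]
    exact sub_nonneg.mp (by rwa [sub_neg_eq_add, add_comm])
  have halgsa : IsSelfAdjoint
      (algebraMap ℝ (EuclideanSpace ℂ (Fin d) →L[ℂ] EuclideanSpace ℂ (Fin d)) c) := by
    rw [← hsmul1, isSelfAdjoint_iff, star_smul, star_one, Complex.star_def,
      Complex.conj_ofReal]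
  have hTsa : IsSelfAdjoint (Matrix.toEuclideanCLM (𝕜 := ℂ) (Φ z)) := by
    have hone : ((c : ℂ) • (1 : Matrix (Fin d) (Fin d) ℂ)).IsHermitian := by
      rw [Matrix.IsHermitian, Matrix.conjTranspose_smul, Matrix.conjTranspose_one,
        Complex.star_def, Complex.conj_ofReal]
    have hherm' : (Φ z).IsHermitian := by
      have h := hone.sub h1'.1
      simpa using h
    exact (isHermitian_iff_isSelfAdjoint_clm _).mp hherm'
  have hnormT : ‖Φ z‖ = ‖Matrix.toEuclideanCLM (𝕜 := ℂ) (Φ z)‖ := Matrix.cstar_norm_def _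
  rw [hnormT]
  have hspec₁ : ∀ r ∈ spectrum ℝ (Matrix.toEuclideanCLM (𝕜 := ℂ) (Φ z)), r ≤ c :=
    (le_algebraMap_iff_spectrum_le (a := Matrix.toEuclideanCLM (𝕜 := ℂ) (Φ z)) hTsa).mp h1''
  have hspec₂ : ∀ r ∈ spectrum ℝ (Matrix.toEuclideanCLM (𝕜 := ℂ) (Φ z)), -c ≤ r :=
    (algebraMap_le_iff_le_spectrum (a := Matrix.toEuclideanCLM (𝕜 := ℂ) (Φ z)) hTsa).mp h2''
  rcases subsingleton_or_nontrivial
      (EuclideanSpace ℂ (Fin d) →L[ℂ] EuclideanSpace ℂ (Fin d)) with hsub'|hnt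
  · have h0 : Matrix.toEuclideanCLM (𝕜 := ℂ) (Φ z) = 0 := Subsingleton.elim _ _
    rw [h0, norm_zero, hc]
    exact norm_nonneg z
  · rcases CStarAlgebra.norm_or_neg_norm_mem_spectrum hTsa with h|h
    · exact hspec₁ _ h
    · have := hspec₂ _ h
      linarith

end Aux

/-- Universal upper bound for the Lipschitz constant: if the range of the
Hermitian-preserving map `E` commutes with every element of `S` and `Φ ∘ E = E` for a UCP
map `Φ`, then `Lip_S(Φ) ≤ 2 · (max_{s∈S} ‖s‖) · Cost_S(E)`. -/
theorem lip_le_two_mul_norm_mul_cost {d : ℕ}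
    (S : Finset (Matrix (Fin d) (Fin d) ℂ))
    (Φ E : Matrix (Fin d) (Fin d) ℂ → Matrix (Fin d) (Fin d) ℂ)
    (hΦ : IsUCP Φ)
    (hE_lin : ∀ (c : ℂ) (x y), E (c • x + y) = c • E x + E y)
    (hE_herm : ∀ x, (E x)ᴴ = E xᴴ)
    (hE_comm : ∀ s ∈ S, ∀ x, s * E x = E x * s)
    (hΦE : ∀ x, Φ (E x) = E x) :
    Lip (cnorm S) Φ ≤ 2 * ((S.sup fun s => ‖s‖₊ : ℝ≥0) : ℝ≥0∞) * Cost (cnorm S) E := by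
  classical
  set M : ℝ≥0 := S.sup fun s => ‖s‖₊ with hM
  refine iSup₂_le fun x hx => ?_
  obtain ⟨hxh, hxc⟩ := hx
  set y := Φ (x - E x) with hy
  have hEx_herm : (E x)ᴴ = E x := by rw [hE_herm, hxh.eq]
  have hxsplit : (x - E x) + E x = x := by abel
  have hΦx : Φ x = y + E x := by
    calc Φ x = Φ ((x - E x) + E x) := by rw [hxsplit]
    _ = y + E x := by rw [hΦ.map_add, hΦE]
  have hherm_sub : (x - E x).IsHermitian := by
    show (x - E x)ᴴ = x - E x
    rw [Matrix.conjTranspose_sub, hxh.eq, hEx_herm]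
  have hynorm : ‖y‖₊ ≤ ‖x - E x‖₊ := by
    have h := ucp_norm_le hΦ hherm_sub
    exact_mod_cast h
  have hbound : cnorm S (Φ x) ≤ 2 * (M : ℝ) * ‖x - E x‖ := by
    have hkey : (S.sup fun s => ‖s * Φ x - Φ x * s‖₊) ≤ 2 * M * ‖x - E x‖₊ := by
      refine Finset.sup_le fun s hs => ?_
      have hcomm : s * Φ x - Φ x * s = s * y - y * s := by
        rw [hΦx, mul_add, add_mul, hE_comm s hs x]
        abel
      rw [hcomm]
      have hsM : ‖s‖₊ ≤ M := Finset.le_sup hs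
      calc ‖s * y - y * s‖₊ ≤ ‖s * y‖₊ + ‖y * s‖₊ := nnnorm_sub_le _ _
      _ ≤ ‖s‖₊ * ‖y‖₊ + ‖y‖₊ * ‖s‖₊ :=
          add_le_add (Matrix.l2_opNNNorm_mul _ _) (Matrix.l2_opNNNorm_mul _ _)
      _ ≤ M * ‖x - E x‖₊ + ‖x - E x‖₊ * M :=
          add_le_add (mul_le_mul' hsM hynorm) (mul_le_mul' hynorm hsM)
      _ = 2 * M * ‖x - E x‖₊ := by ring
    have := NNReal.coe_le_coe.mpr hkey
    rw [cnorm]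
    push_cast at this
    exact this
  have hmem : ENNReal.ofReal ‖E x - x‖ ≤ Cost (cnorm S) E :=
    le_iSup₂ (f := fun x' (_ : x' ∈ {x' : Matrix (Fin d) (Fin d) ℂ |
      x'.IsHermitian ∧ cnorm S x' ≤ 1}) => ENNReal.ofReal ‖E x' - x'‖) x ⟨hxh, hxc⟩
  calc ENNReal.ofReal (cnorm S (Φ x))
      ≤ ENNReal.ofReal (2 * (M : ℝ) * ‖x - E x‖) := ENNReal.ofReal_le_ofReal hbound
    _ = 2 * (M : ℝ≥0∞) * ENNReal.ofReal ‖E x - x‖ := by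
        rw [norm_sub_rev, ENNReal.ofReal_mul (by positivity),
          ENNReal.ofReal_mul (by norm_num)]
        norm_num [ENNReal.ofReal_coe_nnreal]
    _ ≤ 2 * (M : ℝ≥0∞) * Cost (cnorm S) E := mul_le_mul_right hmem _


end
end

section
/- Let S ⊆ M_d be a finite set, let Φ₁, Φ₂ : M_d → M_d be unital completely positive maps, and let E : M_d → M_d be a Hermitian-preserving linear map whose range commutes with every element of S, satisfying Φ₁ ∘ E = Φ₂ ∘ E = E. Assume κ(S) := Cost^{cb}_S(E) < ∞. Then (continuity of cost and Lipschitz constant in the diamond/cb norm): |Cost^{cb}_S(Φ₂) − Cost^{cb}_S(Φ₁)| ≤ κ(S) · ‖Φ₁ − Φ₂‖_{cb} and |Lip^{cb}_S(Φ₂) − Lip^{cb}_S(Φ₁)| ≤ 2 · (max_{s∈S} ‖s‖) · κ(S) · ‖Φ₁ − Φ₂‖_{cb}, where ‖Θ‖_{cb} := sup_{n≥1} sup{ ‖(id_{M_n} ⊗ Θ)(X)‖ : X ∈ M_n ⊗ M_d, ‖X‖ ≤ 1 }. (All the quantities appearing on the left-hand sides are finite under these hypotheses.) -/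
open scoped ENNReal NNReal ComplexOrder Matrix Matrix.Norms.L2Operator Kronecker

noncomputable section

/-- The completely bounded norm `‖Θ‖_{cb} = sup_n sup { ‖(id_{M_n} ⊗ Θ)(X)‖ : ‖X‖ ≤ 1 }`,
valued in `[0,∞]`. -/
def cbNorm {ι : Type*} [Fintype ι] [DecidableEq ι]
    (Θ : Matrix ι ι ℂ → Matrix ι ι ℂ) : ℝ≥0∞ :=
  ⨆ (n : ℕ), ⨆ X ∈ {X : Matrix (Fin n × ι) (Fin n × ι) ℂ | ‖X‖ ≤ 1},
    ENNReal.ofReal ‖ampFun Θ n X‖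


/-! ### Auxiliary lemmas -/

section Aux

set_option linter.unusedSectionVars false
set_option maxHeartbeats 1000000

section SpectralAux

variable {m : Type*} [Fintype m] [DecidableEq m]

private lemma aux_norm_one_le : ‖(1 : Matrix m m ℂ)‖ ≤ 1 := by
  have h := Matrix.l2_opNorm_conjTranspose_mul_self (1 : Matrix m m ℂ)
  simp only [Matrix.conjTranspose_one, mul_one] at h
  nlinarith [norm_nonneg (1 : Matrix m m ℂ)]

private lemma aux_norm_unitary (U : Matrix.unitaryGroup m ℂ) : ‖(U : Matrix m m ℂ)‖ ≤ 1 := by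
  have h := Matrix.l2_opNorm_conjTranspose_mul_self (U : Matrix m m ℂ)
  rw [← Matrix.star_eq_conjTranspose, (Matrix.mem_unitaryGroup_iff').mp U.2] at h
  nlinarith [norm_nonneg (U : Matrix m m ℂ), aux_norm_one_le (m := m)]

private lemma aux_opNorm_le (A : Matrix m m ℂ) {r : ℝ} (hr : 0 ≤ r)
    (h : ∀ x : EuclideanSpace ℂ m, ‖(EuclideanSpace.equiv m ℂ).symm (A *ᵥ x)‖ ≤ r * ‖x‖) :
    ‖A‖ ≤ r := by
  rw [Matrix.l2_opNorm_def]
  exact ContinuousLinearMap.opNorm_le_bound _ hr h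

private lemma aux_norm_diagonal_le {c : m → ℝ} {r : ℝ} (hr : 0 ≤ r) (h : ∀ i, |c i| ≤ r) :
    ‖(Matrix.diagonal (fun i => (c i : ℂ)))‖ ≤ r := by
  refine aux_opNorm_le _ hr fun x => ?_
  rw [EuclideanSpace.norm_eq, EuclideanSpace.norm_eq]
  have key : ∀ i, ‖((EuclideanSpace.equiv m ℂ).symm (Matrix.diagonal (fun i => (c i : ℂ)) *ᵥ x)) i‖ ^ 2
      ≤ r ^ 2 * ‖x i‖ ^ 2 := by
    intro i
    have h0 : ((EuclideanSpace.equiv m ℂ).symm (Matrix.diagonal (fun i => (c i : ℂ)) *ᵥ x)) i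
        = (c i : ℂ) * x i := Matrix.mulVec_diagonal _ _ i
    rw [h0, norm_mul, mul_pow, Complex.norm_real]
    have := h i
    have h2 : ‖c i‖ ^ 2 ≤ r ^ 2 := by
      rw [Real.norm_eq_abs]; nlinarith [abs_nonneg (c i)]
    nlinarith [sq_nonneg (‖x i‖), norm_nonneg (x i), sq_nonneg r]
  calc Real.sqrt (∑ i, ‖((EuclideanSpace.equiv m ℂ).symm (Matrix.diagonal (fun i => (c i : ℂ)) *ᵥ x)) i‖ ^ 2)
      ≤ Real.sqrt (∑ i, r ^ 2 * ‖x i‖ ^ 2) := Real.sqrt_le_sqrt (Finset.sum_le_sum fun i _ => key i)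
    _ = r * Real.sqrt (∑ i, ‖x i‖ ^ 2) := by
        rw [← Finset.mul_sum, Real.sqrt_mul (sq_nonneg r), Real.sqrt_sq hr]

private lemma aux_form_conj {A : Matrix m m ℂ} (hA : A.IsHermitian) (x : m → ℂ) :
    (starRingEnd ℂ) (dotProduct (star x) (A *ᵥ x)) = dotProduct (star x) (A *ᵥ x) := by
  have h1 : star (dotProduct (star x) (A *ᵥ x))
      = dotProduct (star (A *ᵥ x)) (star (star x)) := by
    rw [← Matrix.star_dotProduct_star, star_star]
  rw [← RCLike.star_def, h1, star_star, Matrix.star_mulVec, ← Matrix.dotProduct_mulVec, hA.eq]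

private lemma aux_dot_self (x : EuclideanSpace ℂ m) :
    dotProduct (star (x : m → ℂ)) (x : m → ℂ) = (‖x‖ ^ 2 : ℝ) := by
  have h2 : (inner ℂ x x : ℂ) = (‖x‖ : ℂ) ^ 2 := inner_self_eq_norm_sq_to_K x
  rw [EuclideanSpace.inner_eq_star_dotProduct] at h2
  rw [show ((‖x‖ ^ 2 : ℝ) : ℂ) = (‖x‖ : ℂ) ^ 2 by push_cast; ring, ← h2]; exact dotProduct_comm _ _

private lemma aux_form_bound (A : Matrix m m ℂ) (x : EuclideanSpace ℂ m) :
    ‖dotProduct (star (x : m → ℂ)) (A *ᵥ x)‖ ≤ ‖A‖ * ‖x‖ ^ 2 := by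
  have h1 : dotProduct (star (x : m → ℂ)) (A *ᵥ x)
      = (inner ℂ x ((EuclideanSpace.equiv m ℂ).symm (A *ᵥ x)) : ℂ) := by
    rw [EuclideanSpace.inner_eq_star_dotProduct]; exact dotProduct_comm _ _
  rw [h1]
  calc ‖(inner ℂ x ((EuclideanSpace.equiv m ℂ).symm (A *ᵥ x)) : ℂ)‖
      ≤ ‖x‖ * ‖(EuclideanSpace.equiv m ℂ).symm (A *ᵥ x)‖ := norm_inner_le_norm _ _
    _ ≤ ‖x‖ * (‖A‖ * ‖x‖) :=
        mul_le_mul_of_nonneg_left (Matrix.l2_opNorm_mulVec A x) (norm_nonneg x)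
    _ = ‖A‖ * ‖x‖ ^ 2 := by ring

private lemma aux_herm_smul_one_sub {A : Matrix m m ℂ} (hA : A.IsHermitian) {r : ℝ} (hr : ‖A‖ ≤ r) :
    ((r : ℂ) • 1 - A).PosSemidef := by
  have hherm : ((r : ℂ) • 1 - A).IsHermitian := by
    unfold Matrix.IsHermitian
    rw [Matrix.conjTranspose_sub, Matrix.conjTranspose_smul, Matrix.conjTranspose_one, hA.eq,
      Complex.star_def, Complex.conj_ofReal]
  refine Matrix.PosSemidef.of_dotProduct_mulVec_nonneg hherm fun x => ?_
  set x' : EuclideanSpace ℂ m := (WithLp.equiv 2 _).symm x with hx'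
  have hxx : x = (x' : m → ℂ) := rfl
  have hform : dotProduct (star x) (((r : ℂ) • 1 - A) *ᵥ x)
      = (r : ℂ) * (‖x'‖ ^ 2 : ℝ) - dotProduct (star x) (A *ᵥ x) := by
    rw [Matrix.sub_mulVec, dotProduct_sub, Matrix.smul_mulVec, Matrix.one_mulVec,
      dotProduct_smul, hxx, aux_dot_self]
    rfl
  rw [hform]
  have him : (dotProduct (star x) (A *ᵥ x)).im = 0 := by
    have := aux_form_conj hA x
    rwa [Complex.conj_eq_iff_im] at this
  have hre : (dotProduct (star x) (A *ᵥ x)).re ≤ r * ‖x'‖ ^ 2 := by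
    calc (dotProduct (star x) (A *ᵥ x)).re
        ≤ ‖dotProduct (star x) (A *ᵥ x)‖ := Complex.re_le_norm _
      _ ≤ ‖A‖ * ‖x'‖ ^ 2 := by rw [hxx]; exact aux_form_bound A x'
      _ ≤ r * ‖x'‖ ^ 2 := mul_le_mul_of_nonneg_right hr (sq_nonneg _)
  rw [Complex.le_def]
  constructor
  · simp only [Complex.sub_re, Complex.mul_re, Complex.ofReal_re, Complex.ofReal_im,
      Complex.zero_re, zero_mul, sub_zero]
    nlinarith [hre]
  · simp only [Complex.sub_im, Complex.mul_im, Complex.ofReal_re, Complex.ofReal_im,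
      Complex.zero_im, zero_mul, mul_zero, him]
    ring

private lemma aux_herm_add_smul_one {A : Matrix m m ℂ} (hA : A.IsHermitian) {r : ℝ} (hr : ‖A‖ ≤ r) :
    (A + (r : ℂ) • 1).PosSemidef := by
  have h := aux_herm_smul_one_sub (A := -A) (hA.neg) (r := r) (by rwa [norm_neg])
  have h2 : (r : ℂ) • 1 - (-A) = A + (r : ℂ) • 1 := by
    rw [sub_neg_eq_add, add_comm]
  rwa [h2] at h

private lemma aux_norm_le_of_sandwich {A : Matrix m m ℂ} (hA : A.IsHermitian) {r : ℝ} (hr : 0 ≤ r)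
    (hP : (A + (r : ℂ) • 1).PosSemidef) (hQ : ((r : ℂ) • 1 - A).PosSemidef) : ‖A‖ ≤ r := by
  have heig : ∀ i, |hA.eigenvalues i| ≤ r := by
    intro i
    set v : EuclideanSpace ℂ m := hA.eigenvectorBasis i with hv
    have hv1 : ‖v‖ = 1 := hA.eigenvectorBasis.orthonormal.1 i
    have hvv : dotProduct (star (v : m → ℂ)) (v : m → ℂ) = 1 := by
      rw [aux_dot_self, hv1]; norm_num
    have hev : hA.eigenvalues i
        = RCLike.re (dotProduct (star (v : m → ℂ)) (A *ᵥ (v : m → ℂ))) :=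
      hA.eigenvalues_eq i
    rw [abs_le]
    constructor
    · have h2 := hP.re_dotProduct_nonneg (v : m → ℂ)
      rw [Matrix.add_mulVec, dotProduct_add, Matrix.smul_mulVec,
        Matrix.one_mulVec, dotProduct_smul, hvv] at h2
      rw [map_add] at h2
      simp only [smul_eq_mul, mul_one] at h2
      rw [show RCLike.re ((r : ℂ)) = r from by simp] at h2
      linarith [hev ▸ h2]
    · have h2 := hQ.re_dotProduct_nonneg (v : m → ℂ)
      rw [Matrix.sub_mulVec, dotProduct_sub, Matrix.smul_mulVec,
        Matrix.one_mulVec, dotProduct_smul, hvv] at h2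
      rw [map_sub] at h2
      simp only [smul_eq_mul, mul_one] at h2
      rw [show RCLike.re ((r : ℂ)) = r from by simp] at h2
      linarith [hev ▸ h2]
  have hdiag : ‖(Matrix.diagonal (RCLike.ofReal ∘ hA.eigenvalues) : Matrix m m ℂ)‖ ≤ r :=
    aux_norm_diagonal_le hr heig
  have hs := hA.spectral_theorem
  rw [Unitary.conjStarAlgAut_apply] at hs
  calc ‖A‖ = ‖(hA.eigenvectorUnitary : Matrix m m ℂ) * Matrix.diagonal (RCLike.ofReal ∘ hA.eigenvalues)
      * (star (hA.eigenvectorUnitary : Matrix m m ℂ))‖ := by rw [← hs]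
    _ ≤ ‖(hA.eigenvectorUnitary : Matrix m m ℂ) * Matrix.diagonal (RCLike.ofReal ∘ hA.eigenvalues)‖
        * ‖(star (hA.eigenvectorUnitary : Matrix m m ℂ))‖ := Matrix.l2_opNorm_mul _ _
    _ ≤ (‖(hA.eigenvectorUnitary : Matrix m m ℂ)‖ * ‖(Matrix.diagonal (RCLike.ofReal ∘ hA.eigenvalues) : Matrix m m ℂ)‖) * ‖(star (hA.eigenvectorUnitary : Matrix m m ℂ))‖ := by
        apply mul_le_mul_of_nonneg_right (Matrix.l2_opNorm_mul _ _) (norm_nonneg _)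
    _ ≤ (1 * r) * 1 := by
        have h1 : ‖(star (hA.eigenvectorUnitary : Matrix m m ℂ))‖ ≤ 1 := by
          rw [Matrix.star_eq_conjTranspose, Matrix.l2_opNorm_conjTranspose]
          exact aux_norm_unitary _
        apply mul_le_mul
        · apply mul_le_mul (aux_norm_unitary _) hdiag (norm_nonneg _)
            (by linarith [norm_nonneg (hA.eigenvectorUnitary : Matrix m m ℂ)])
        · exact h1
        · exact norm_nonneg _
        · nlinarith [hr]
    _ = r := by ring

end SpectralAux

section MainAux

variable {ι : Type*} [Fintype ι] [DecidableEq ι]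

private lemma aux_kron_one_norm_le (n : ℕ) (s : Matrix ι ι ℂ) :
    ‖((1 : Matrix (Fin n) (Fin n) ℂ) ⊗ₖ s)‖ ≤ ‖s‖ := by
  refine aux_opNorm_le _ (norm_nonneg s) fun x => ?_
  have hmv : ∀ p : Fin n × ι, (((1 : Matrix (Fin n) (Fin n) ℂ) ⊗ₖ s) *ᵥ (x : Fin n × ι → ℂ)) p
      = (s *ᵥ fun j => x (p.1, j)) p.2 := by
    intro p
    simp only [Matrix.mulVec, dotProduct, Fintype.sum_prod_type,
      Matrix.kroneckerMap_apply, Matrix.one_apply]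
    rw [Finset.sum_eq_single p.1]
    · simp [Matrix.mulVec, dotProduct]
    · intro b _ hb; simp [Ne.symm hb]
    · simp
  have hsq : ∀ k : Fin n, (∑ i, ‖(s *ᵥ fun j => x (k, j)) i‖ ^ 2)
      ≤ ‖s‖ ^ 2 * ∑ i, ‖x (k, i)‖ ^ 2 := by
    intro k
    set y : EuclideanSpace ℂ ι := (WithLp.equiv 2 _).symm (fun j => x (k, j)) with hy
    have h1 : ‖(EuclideanSpace.equiv ι ℂ).symm (s *ᵥ (y : ι → ℂ))‖ ≤ ‖s‖ * ‖y‖ :=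
      Matrix.l2_opNorm_mulVec s y
    have h2 : ‖(EuclideanSpace.equiv ι ℂ).symm (s *ᵥ (y : ι → ℂ))‖
        = Real.sqrt (∑ i, ‖(s *ᵥ fun j => x (k, j)) i‖ ^ 2) := EuclideanSpace.norm_eq _
    have h3 : ‖y‖ = Real.sqrt (∑ i, ‖x (k, i)‖ ^ 2) := EuclideanSpace.norm_eq _
    rw [h2, h3] at h1
    have h5 : (0 : ℝ) ≤ ∑ i, ‖(s *ᵥ fun j => x (k, j)) i‖ ^ 2 :=
      Finset.sum_nonneg fun i _ => sq_nonneg _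
    have h6 : (0 : ℝ) ≤ ∑ i, ‖x (k, i)‖ ^ 2 := Finset.sum_nonneg fun i _ => sq_nonneg _
    nlinarith [Real.sq_sqrt h5, Real.sq_sqrt h6, Real.sqrt_nonneg (∑ i, ‖x (k, i)‖ ^ 2),
      norm_nonneg s, Real.sqrt_nonneg (∑ i, ‖(s *ᵥ fun j => x (k, j)) i‖ ^ 2)]
  rw [EuclideanSpace.norm_eq, EuclideanSpace.norm_eq, Fintype.sum_prod_type,
    Fintype.sum_prod_type]
  calc Real.sqrt (∑ k : Fin n, ∑ i : ι, ‖((EuclideanSpace.equiv (Fin n × ι) ℂ).symm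
        (((1 : Matrix (Fin n) (Fin n) ℂ) ⊗ₖ s) *ᵥ (x : Fin n × ι → ℂ))) (k, i)‖ ^ 2)
      = Real.sqrt (∑ k : Fin n, ∑ i, ‖(s *ᵥ fun j => x (k, j)) i‖ ^ 2) := by
        congr 1
        refine Finset.sum_congr rfl fun k _ => Finset.sum_congr rfl fun i _ => ?_
        rw [show ((EuclideanSpace.equiv (Fin n × ι) ℂ).symm
          (((1 : Matrix (Fin n) (Fin n) ℂ) ⊗ₖ s) *ᵥ (x : Fin n × ι → ℂ))) (k, i)
          = (s *ᵥ fun j => x (k, j)) i from hmv (k, i)]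
    _ ≤ Real.sqrt (∑ k : Fin n, ‖s‖ ^ 2 * ∑ i, ‖x (k, i)‖ ^ 2) :=
        Real.sqrt_le_sqrt (Finset.sum_le_sum fun k _ => hsq k)
    _ = ‖s‖ * Real.sqrt (∑ k : Fin n, ∑ i : ι, ‖x (k, i)‖ ^ 2) := by
        rw [← Finset.mul_sum, Real.sqrt_mul (sq_nonneg _), Real.sqrt_sq (norm_nonneg s)]

variable {Φ E : Matrix ι ι ℂ → Matrix ι ι ℂ} {n : ℕ}

private lemma ampFun_comp (X : Matrix (Fin n × ι) (Fin n × ι) ℂ) :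
    ampFun Φ n (ampFun E n X) = ampFun (fun x => Φ (E x)) n X := rfl

private lemma ampFun_congr {Φ' : Matrix ι ι ℂ → Matrix ι ι ℂ} (h : ∀ x, Φ x = Φ' x)
    (X : Matrix (Fin n × ι) (Fin n × ι) ℂ) : ampFun Φ n X = ampFun Φ' n X := by
  ext p q
  show Φ _ p.2 q.2 = Φ' _ p.2 q.2
  rw [h]

private lemma ampFun_add (h : ∀ x y, Φ (x + y) = Φ x + Φ y) (X Y : Matrix (Fin n × ι) (Fin n × ι) ℂ) :
    ampFun Φ n (X + Y) = ampFun Φ n X + ampFun Φ n Y := by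
  ext p q
  show Φ (Matrix.of fun k l => (X + Y) (p.1, k) (q.1, l)) p.2 q.2 = _
  rw [show (Matrix.of fun k l => (X + Y) (p.1, k) (q.1, l))
    = (Matrix.of fun k l => X (p.1, k) (q.1, l)) + (Matrix.of fun k l => Y (p.1, k) (q.1, l)) from rfl, h]
  rfl

private lemma ampFun_smul (h : ∀ (c : ℂ) x, Φ (c • x) = c • Φ x) (c : ℂ)
    (X : Matrix (Fin n × ι) (Fin n × ι) ℂ) : ampFun Φ n (c • X) = c • ampFun Φ n X := by
  ext p q
  show Φ (Matrix.of fun k l => (c • X) (p.1, k) (q.1, l)) p.2 q.2 = _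
  rw [show (Matrix.of fun k l => (c • X) (p.1, k) (q.1, l))
    = c • (Matrix.of fun k l => X (p.1, k) (q.1, l)) from rfl, h]
  rfl

private lemma ampFun_sub (ha : ∀ x y, Φ (x + y) = Φ x + Φ y) (hs : ∀ (c : ℂ) x, Φ (c • x) = c • Φ x)
    (X Y : Matrix (Fin n × ι) (Fin n × ι) ℂ) :
    ampFun Φ n (X - Y) = ampFun Φ n X - ampFun Φ n Y := by
  have h0 : X - Y = X + (-1 : ℂ) • Y := by
    rw [neg_one_smul, sub_eq_add_neg]
  rw [h0, ampFun_add ha, ampFun_smul hs, neg_one_smul, ← sub_eq_add_neg]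

private lemma ampFun_pt_sub (Φ₁ Φ₂ : Matrix ι ι ℂ → Matrix ι ι ℂ)
    (X : Matrix (Fin n × ι) (Fin n × ι) ℂ) :
    ampFun (fun x => Φ₁ x - Φ₂ x) n X = ampFun Φ₁ n X - ampFun Φ₂ n X := rfl

private lemma ampFun_one (hs : ∀ (c : ℂ) x, Φ (c • x) = c • Φ x) (h1 : Φ 1 = 1) :
    ampFun Φ n (1 : Matrix (Fin n × ι) (Fin n × ι) ℂ) = 1 := by
  ext p q
  show Φ (Matrix.of fun k l => (1 : Matrix (Fin n × ι) (Fin n × ι) ℂ) (p.1, k) (q.1, l)) p.2 q.2 = _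
  have hblock : (Matrix.of fun k l => (1 : Matrix (Fin n × ι) (Fin n × ι) ℂ) (p.1, k) (q.1, l))
      = (if p.1 = q.1 then (1 : ℂ) else 0) • (1 : Matrix ι ι ℂ) := by
    ext k l
    simp only [Matrix.of_apply, Matrix.one_apply, Matrix.smul_apply, smul_eq_mul, Prod.mk.injEq]
    by_cases h : p.1 = q.1 <;> by_cases h' : k = l <;> simp [h, h', Prod.ext_iff]
  rw [hblock, hs, h1]
  by_cases h : p.1 = q.1
  · simp only [h, if_true, one_smul]
    by_cases h' : p.2 = q.2
    · simp [Matrix.one_apply, h, h', Prod.ext_iff]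
    · simp [Matrix.one_apply, h, h', Prod.ext_iff]
  · simp [Matrix.one_apply, h, Prod.ext_iff]

private lemma ampFun_herm_of_herm (hh : ∀ x, (Φ x)ᴴ = Φ xᴴ) {X : Matrix (Fin n × ι) (Fin n × ι) ℂ}
    (hX : X.IsHermitian) : (ampFun Φ n X).IsHermitian := by
  ext p q
  show ((ampFun Φ n X)ᴴ) p q = _
  rw [Matrix.conjTranspose_apply]
  show star (Φ (Matrix.of fun k l => X (q.1, k) (p.1, l)) q.2 p.2) = _
  have h0 : star (Φ (Matrix.of fun k l => X (q.1, k) (p.1, l)) q.2 p.2)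
      = (Φ (Matrix.of fun k l => X (q.1, k) (p.1, l)))ᴴ p.2 q.2 := rfl
  rw [h0, hh]
  congr 1
  ext k l
  simp only [Matrix.conjTranspose_apply, Matrix.of_apply]
  exact congrFun (congrFun hX (p.1, k)) (q.1, l) ▸ (Matrix.conjTranspose_apply X (q.1, l) (p.1, k) ▸ rfl)

end MainAux

section UCPAux

variable {ι : Type*} [Fintype ι] [DecidableEq ι]
variable {Φ : Matrix ι ι ℂ → Matrix ι ι ℂ} {n : ℕ}

private lemma aux_smul_one_psd {r : ℝ} (hr : 0 ≤ r) :
    ((r : ℂ) • 1 : Matrix ι ι ℂ).PosSemidef := by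
  have h := aux_herm_smul_one_sub (A := (0 : Matrix ι ι ℂ)) Matrix.isHermitian_zero
    (r := r) (by simpa using hr)
  simpa using h

private lemma ucp_amp_herm (hΦ : IsUCP Φ) {X : Matrix (Fin n × ι) (Fin n × ι) ℂ}
    (hX : X.IsHermitian) : (ampFun Φ n X).IsHermitian := by
  set c : ℝ := ‖X‖ with hc
  have hc0 : 0 ≤ c := norm_nonneg X
  have hP : (X + (c : ℂ) • 1).PosSemidef := aux_herm_add_smul_one hX le_rfl
  have hampP : (ampFun Φ n (X + (c : ℂ) • 1)).PosSemidef := hΦ.cp n _ hP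
  have hsplit : ampFun Φ n (X + (c : ℂ) • 1)
      = ampFun Φ n X + (c : ℂ) • 1 := by
    rw [ampFun_add hΦ.map_add]
    congr 1
    rw [show ((c : ℂ) • 1 : Matrix (Fin n × ι) (Fin n × ι) ℂ)
      = (c : ℂ) • (1 : Matrix (Fin n × ι) (Fin n × ι) ℂ) from rfl,
      ampFun_smul hΦ.map_smul, ampFun_one hΦ.map_smul hΦ.unital]
  have h1 : (ampFun Φ n X + (c : ℂ) • 1).IsHermitian := hsplit ▸ hampP.1
  have h2 : ((c : ℂ) • 1 : Matrix (Fin n × ι) (Fin n × ι) ℂ).IsHermitian :=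
    (aux_smul_one_psd hc0).1
  have := h1.sub h2
  simpa using this

private lemma ucp_amp_norm_le (hΦ : IsUCP Φ) {X : Matrix (Fin n × ι) (Fin n × ι) ℂ}
    (hX : X.IsHermitian) : ‖ampFun Φ n X‖ ≤ ‖X‖ := by
  set c : ℝ := ‖X‖ with hc
  have hc0 : 0 ≤ c := norm_nonneg X
  have hone : ampFun Φ n ((c : ℂ) • 1 : Matrix (Fin n × ι) (Fin n × ι) ℂ) = (c : ℂ) • 1 := by
    rw [ampFun_smul hΦ.map_smul, ampFun_one hΦ.map_smul hΦ.unital]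
  have hP : (ampFun Φ n X + (c : ℂ) • 1).PosSemidef := by
    have h1 : (ampFun Φ n (X + (c : ℂ) • 1)).PosSemidef :=
      hΦ.cp n _ (aux_herm_add_smul_one hX le_rfl)
    rwa [ampFun_add hΦ.map_add, hone] at h1
  have hQ : ((c : ℂ) • 1 - ampFun Φ n X).PosSemidef := by
    have h1 : (ampFun Φ n ((c : ℂ) • 1 - X)).PosSemidef :=
      hΦ.cp n _ (aux_herm_smul_one_sub hX le_rfl)
    rwa [ampFun_sub hΦ.map_add hΦ.map_smul, hone] at h1
  exact aux_norm_le_of_sandwich (ucp_amp_herm hΦ hX) hc0 hP hQ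

end UCPAux

section CnormAux

variable {ι : Type*} [Fintype ι] [DecidableEq ι]
variable {S : Finset (Matrix ι ι ℂ)} {n : ℕ}

private lemma cnormAmp_nonneg (X : Matrix (Fin n × ι) (Fin n × ι) ℂ) :
    0 ≤ cnormAmp S n X := NNReal.coe_nonneg _

private lemma le_cnormAmp {s : Matrix ι ι ℂ} (hs : s ∈ S) (X : Matrix (Fin n × ι) (Fin n × ι) ℂ) :
    ‖((1 : Matrix (Fin n) (Fin n) ℂ) ⊗ₖ s) * X - X * ((1 : Matrix (Fin n) (Fin n) ℂ) ⊗ₖ s)‖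
      ≤ cnormAmp S n X := by
  rw [cnormAmp, ← coe_nnnorm]
  exact_mod_cast Finset.le_sup (f := fun s => ‖((1 : Matrix (Fin n) (Fin n) ℂ) ⊗ₖ s) * X
    - X * ((1 : Matrix (Fin n) (Fin n) ℂ) ⊗ₖ s)‖₊) hs

private lemma cnormAmp_le {X : Matrix (Fin n × ι) (Fin n × ι) ℂ} {r : ℝ} (hr : 0 ≤ r)
    (h : ∀ s ∈ S, ‖((1 : Matrix (Fin n) (Fin n) ℂ) ⊗ₖ s) * X
      - X * ((1 : Matrix (Fin n) (Fin n) ℂ) ⊗ₖ s)‖ ≤ r) :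
    cnormAmp S n X ≤ r := by
  rw [cnormAmp]
  have h2 : (S.sup fun s => ‖((1 : Matrix (Fin n) (Fin n) ℂ) ⊗ₖ s) * X
      - X * ((1 : Matrix (Fin n) (Fin n) ℂ) ⊗ₖ s)‖₊) ≤ r.toNNReal := by
    refine Finset.sup_le fun s hs => ?_
    rw [← NNReal.coe_le_coe, coe_nnnorm, Real.coe_toNNReal _ hr]
    exact h s hs
  calc ((S.sup fun s => ‖((1 : Matrix (Fin n) (Fin n) ℂ) ⊗ₖ s) * X
      - X * ((1 : Matrix (Fin n) (Fin n) ℂ) ⊗ₖ s)‖₊ : ℝ≥0) : ℝ)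
      ≤ (r.toNNReal : ℝ) := by exact_mod_cast h2
    _ = r := Real.coe_toNNReal _ hr

private lemma cnormAmp_add_le (X Y : Matrix (Fin n × ι) (Fin n × ι) ℂ) :
    cnormAmp S n (X + Y) ≤ cnormAmp S n X + cnormAmp S n Y := by
  refine cnormAmp_le (add_nonneg (cnormAmp_nonneg X) (cnormAmp_nonneg Y)) fun s hs => ?_
  have hdist : ((1 : Matrix (Fin n) (Fin n) ℂ) ⊗ₖ s) * (X + Y)
      - (X + Y) * ((1 : Matrix (Fin n) (Fin n) ℂ) ⊗ₖ s)
      = (((1 : Matrix (Fin n) (Fin n) ℂ) ⊗ₖ s) * X - X * ((1 : Matrix (Fin n) (Fin n) ℂ) ⊗ₖ s))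
      + (((1 : Matrix (Fin n) (Fin n) ℂ) ⊗ₖ s) * Y - Y * ((1 : Matrix (Fin n) (Fin n) ℂ) ⊗ₖ s)) := by
    rw [mul_add, add_mul]; abel
  rw [hdist]
  exact (norm_add_le _ _).trans (add_le_add (le_cnormAmp hs X) (le_cnormAmp hs Y))

private lemma cnormAmp_sub_le (X Y : Matrix (Fin n × ι) (Fin n × ι) ℂ) :
    cnormAmp S n (X - Y) ≤ cnormAmp S n X + cnormAmp S n Y := by
  refine cnormAmp_le (add_nonneg (cnormAmp_nonneg X) (cnormAmp_nonneg Y)) fun s hs => ?_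
  have hdist : ((1 : Matrix (Fin n) (Fin n) ℂ) ⊗ₖ s) * (X - Y)
      - (X - Y) * ((1 : Matrix (Fin n) (Fin n) ℂ) ⊗ₖ s)
      = (((1 : Matrix (Fin n) (Fin n) ℂ) ⊗ₖ s) * X - X * ((1 : Matrix (Fin n) (Fin n) ℂ) ⊗ₖ s))
      - (((1 : Matrix (Fin n) (Fin n) ℂ) ⊗ₖ s) * Y - Y * ((1 : Matrix (Fin n) (Fin n) ℂ) ⊗ₖ s)) := by
    rw [mul_sub, sub_mul]; abel
  rw [hdist]
  exact (norm_sub_le _ _).trans (add_le_add (le_cnormAmp hs X) (le_cnormAmp hs Y))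

private lemma cnormAmp_le_two_mul_norm (X : Matrix (Fin n × ι) (Fin n × ι) ℂ) :
    cnormAmp S n X ≤ 2 * ((S.sup fun s => ‖s‖₊ : ℝ≥0) : ℝ) * ‖X‖ := by
  set M : ℝ := ((S.sup fun s => ‖s‖₊ : ℝ≥0) : ℝ) with hM
  have hM0 : 0 ≤ M := NNReal.coe_nonneg _
  refine cnormAmp_le (by positivity) fun s hs => ?_
  have hsM : ‖s‖ ≤ M := by
    rw [hM, ← coe_nnnorm]
    exact_mod_cast Finset.le_sup (f := fun s => ‖s‖₊) hs
  have hT : ‖((1 : Matrix (Fin n) (Fin n) ℂ) ⊗ₖ s)‖ ≤ M := (aux_kron_one_norm_le n s).trans hsM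
  calc ‖((1 : Matrix (Fin n) (Fin n) ℂ) ⊗ₖ s) * X - X * ((1 : Matrix (Fin n) (Fin n) ℂ) ⊗ₖ s)‖
      ≤ ‖((1 : Matrix (Fin n) (Fin n) ℂ) ⊗ₖ s) * X‖ + ‖X * ((1 : Matrix (Fin n) (Fin n) ℂ) ⊗ₖ s)‖ :=
        norm_sub_le _ _
    _ ≤ ‖((1 : Matrix (Fin n) (Fin n) ℂ) ⊗ₖ s)‖ * ‖X‖ + ‖X‖ * ‖((1 : Matrix (Fin n) (Fin n) ℂ) ⊗ₖ s)‖ :=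
        add_le_add (Matrix.l2_opNorm_mul _ _) (Matrix.l2_opNorm_mul _ _)
    _ ≤ M * ‖X‖ + ‖X‖ * M := by
        have := norm_nonneg X
        have := norm_nonneg ((1 : Matrix (Fin n) (Fin n) ℂ) ⊗ₖ s)
        nlinarith
    _ = 2 * M * ‖X‖ := by ring

end CnormAux

section SupAux

variable {ι : Type*} [Fintype ι] [DecidableEq ι]
variable {S : Finset (Matrix ι ι ℂ)} {Φ : Matrix ι ι ℂ → Matrix ι ι ℂ}

private lemma le_Costcb {n : ℕ} {X : Matrix (Fin n × ι) (Fin n × ι) ℂ}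
    (h1 : X.IsHermitian) (h2 : cnormAmp S n X ≤ 1) :
    ENNReal.ofReal ‖ampFun Φ n X - X‖ ≤ Costcb S Φ :=
  le_iSup_of_le n (le_iSup₂_of_le X ⟨h1, h2⟩ le_rfl)

private lemma Costcb_le {C : ℝ≥0∞}
    (h : ∀ (n : ℕ) (X : Matrix (Fin n × ι) (Fin n × ι) ℂ), X.IsHermitian → cnormAmp S n X ≤ 1 →
      ENNReal.ofReal ‖ampFun Φ n X - X‖ ≤ C) : Costcb S Φ ≤ C :=
  iSup_le fun n => iSup₂_le fun X hX => h n X hX.1 hX.2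

private lemma le_Lipcb {n : ℕ} {X : Matrix (Fin n × ι) (Fin n × ι) ℂ}
    (h1 : X.IsHermitian) (h2 : cnormAmp S n X ≤ 1) :
    ENNReal.ofReal (cnormAmp S n (ampFun Φ n X)) ≤ Lipcb S Φ :=
  le_iSup_of_le n (le_iSup₂_of_le X ⟨h1, h2⟩ le_rfl)

private lemma Lipcb_le {C : ℝ≥0∞}
    (h : ∀ (n : ℕ) (X : Matrix (Fin n × ι) (Fin n × ι) ℂ), X.IsHermitian → cnormAmp S n X ≤ 1 →
      ENNReal.ofReal (cnormAmp S n (ampFun Φ n X)) ≤ C) : Lipcb S Φ ≤ C :=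
  iSup_le fun n => iSup₂_le fun X hX => h n X hX.1 hX.2

private lemma le_cbNorm {Θ : Matrix ι ι ℂ → Matrix ι ι ℂ} {n : ℕ}
    {X : Matrix (Fin n × ι) (Fin n × ι) ℂ} (h : ‖X‖ ≤ 1) :
    ENNReal.ofReal ‖ampFun Θ n X‖ ≤ cbNorm Θ :=
  le_iSup_of_le n (le_iSup₂_of_le X h le_rfl)

private lemma ofReal_amp_le_cbNorm_mul {Θ : Matrix ι ι ℂ → Matrix ι ι ℂ}
    (hs : ∀ (c : ℂ) x, Θ (c • x) = c • Θ x) {n : ℕ} (Y : Matrix (Fin n × ι) (Fin n × ι) ℂ) :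
    ENNReal.ofReal ‖ampFun Θ n Y‖ ≤ cbNorm Θ * ENNReal.ofReal ‖Y‖ := by
  by_cases hY : Y = 0
  · subst hY
    have h0 : ampFun Θ n (0 : Matrix (Fin n × ι) (Fin n × ι) ℂ) = 0 := by
      have := ampFun_smul hs 0 (0 : Matrix (Fin n × ι) (Fin n × ι) ℂ)
      simpa using this
    simp [h0]
  · set c : ℝ := ‖Y‖ with hc
    have hc0 : 0 < c := norm_pos_iff.mpr hY
    set X : Matrix (Fin n × ι) (Fin n × ι) ℂ := ((c⁻¹ : ℝ) : ℂ) • Y with hX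
    have hXnorm : ‖X‖ ≤ 1 := by
      rw [hX, norm_smul]
      simp only [Complex.norm_real, Real.norm_eq_abs, abs_of_pos (inv_pos.mpr hc0)]
      rw [← hc, inv_mul_cancel₀ (ne_of_gt hc0)]
    have hampX : ampFun Θ n X = ((c⁻¹ : ℝ) : ℂ) • ampFun Θ n Y := ampFun_smul hs _ Y
    have hnorm : ‖ampFun Θ n Y‖ = ‖ampFun Θ n X‖ * c := by
      rw [hampX, norm_smul]
      simp only [Complex.norm_real, Real.norm_eq_abs, abs_of_pos (inv_pos.mpr hc0)]
      field_simp
    rw [hnorm, ENNReal.ofReal_mul' (le_of_lt hc0)]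
    exact mul_le_mul' (le_cbNorm hXnorm) le_rfl

end SupAux

end Aux
/-- Continuity of the complete transportation cost and the complete
Lipschitz constant in the cb (diamond) norm: for UCP maps `Φ₁, Φ₂` fixing a conditional
expectation `E` onto the commutant of `S` with `κ(S) := Cost^{cb}_S(E) < ∞`,
`|Cost^{cb}_S(Φ₂) − Cost^{cb}_S(Φ₁)| ≤ κ(S)·‖Φ₁ − Φ₂‖_{cb}` and
`|Lip^{cb}_S(Φ₂) − Lip^{cb}_S(Φ₁)| ≤ 2·(max_{s∈S}‖s‖)·κ(S)·‖Φ₁ − Φ₂‖_{cb}`,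
all the quantities on the left-hand sides being finite. -/
theorem costcb_lipcb_continuity {d : ℕ}
    (S : Finset (Matrix (Fin d) (Fin d) ℂ))
    (Φ₁ Φ₂ E : Matrix (Fin d) (Fin d) ℂ → Matrix (Fin d) (Fin d) ℂ)
    (hΦ₁ : IsUCP Φ₁) (hΦ₂ : IsUCP Φ₂)
    (hE_lin : ∀ (c : ℂ) (x y), E (c • x + y) = c • E x + E y)
    (hE_herm : ∀ x, (E x)ᴴ = E xᴴ)
    (hE_comm : ∀ s ∈ S, ∀ x, s * E x = E x * s)
    (hΦ₁E : ∀ x, Φ₁ (E x) = E x) (hΦ₂E : ∀ x, Φ₂ (E x) = E x)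
    (hκ : Costcb S E ≠ ⊤) :
    (Costcb S Φ₁ ≠ ⊤ ∧ Costcb S Φ₂ ≠ ⊤ ∧ Lipcb S Φ₁ ≠ ⊤ ∧ Lipcb S Φ₂ ≠ ⊤) ∧
    Costcb S Φ₂ ≤ Costcb S Φ₁ + Costcb S E * cbNorm (fun x => Φ₁ x - Φ₂ x) ∧
    Costcb S Φ₁ ≤ Costcb S Φ₂ + Costcb S E * cbNorm (fun x => Φ₁ x - Φ₂ x) ∧
    Lipcb S Φ₂ ≤ Lipcb S Φ₁ +
      2 * ((S.sup fun s => ‖s‖₊ : ℝ≥0) : ℝ≥0∞) * Costcb S E *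
        cbNorm (fun x => Φ₁ x - Φ₂ x) ∧
    Lipcb S Φ₁ ≤ Lipcb S Φ₂ +
      2 * ((S.sup fun s => ‖s‖₊ : ℝ≥0) : ℝ≥0∞) * Costcb S E *
        cbNorm (fun x => Φ₁ x - Φ₂ x) := by

  classical
  -- linearity consequences for E
  have hE0 : E 0 = 0 := by
    have h := hE_lin 1 0 0
    simp only [one_smul, add_zero] at h
    exact left_eq_add.mp h
  have hEsmul : ∀ (c : ℂ) (x), E (c • x) = c • E x := by
    intro c x
    have h := hE_lin c x 0
    simpa [hE0] using h
  -- properties of Θ := Φ₁ - Φ₂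
  have hΘa : ∀ x y, (fun x => Φ₁ x - Φ₂ x) (x + y)
      = (fun x => Φ₁ x - Φ₂ x) x + (fun x => Φ₁ x - Φ₂ x) y := by
    intro x y
    simp only
    rw [hΦ₁.map_add, hΦ₂.map_add]
    abel
  have hΘs : ∀ (c : ℂ) (x), (fun x => Φ₁ x - Φ₂ x) (c • x) = c • (fun x => Φ₁ x - Φ₂ x) x := by
    intro c x
    simp only
    rw [hΦ₁.map_smul, hΦ₂.map_smul, smul_sub]
  have hΘE : ∀ x, (fun x => Φ₁ x - Φ₂ x) (E x) = 0 := by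
    intro x
    simp only
    rw [hΦ₁E, hΦ₂E, sub_self]
  -- the key bound on the amplified difference
  have keyΘ : ∀ (n : ℕ) (X : Matrix (Fin n × Fin d) (Fin n × Fin d) ℂ), X.IsHermitian →
      cnormAmp S n X ≤ 1 →
      ENNReal.ofReal ‖ampFun (fun x => Φ₁ x - Φ₂ x) n X‖
        ≤ Costcb S E * cbNorm (fun x => Φ₁ x - Φ₂ x) := by
    intro n X hX hC
    have hEY : ampFun (fun x => Φ₁ x - Φ₂ x) n (ampFun E n X) = 0 := by
      rw [ampFun_comp, ampFun_congr hΘE]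
      ext p q
      rfl
    have hrw : ampFun (fun x => Φ₁ x - Φ₂ x) n X
        = ampFun (fun x => Φ₁ x - Φ₂ x) n (X - ampFun E n X) := by
      rw [ampFun_sub hΘa hΘs, hEY, sub_zero]
    rw [hrw]
    calc ENNReal.ofReal ‖ampFun (fun x => Φ₁ x - Φ₂ x) n (X - ampFun E n X)‖
        ≤ cbNorm (fun x => Φ₁ x - Φ₂ x) * ENNReal.ofReal ‖X - ampFun E n X‖ :=
          ofReal_amp_le_cbNorm_mul hΘs _
      _ ≤ cbNorm (fun x => Φ₁ x - Φ₂ x) * Costcb S E := by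
          refine mul_le_mul' le_rfl ?_
          rw [norm_sub_rev]
          exact le_Costcb hX hC
      _ = Costcb S E * cbNorm (fun x => Φ₁ x - Φ₂ x) := mul_comm _ _
  -- finiteness preliminaries
  set k : ℝ := (Costcb S E).toReal with hk
  have hk0 : 0 ≤ k := ENNReal.toReal_nonneg
  have hκk : Costcb S E = ENNReal.ofReal k := (ENNReal.ofReal_toReal hκ).symm
  have hEbound : ∀ (n : ℕ) (X : Matrix (Fin n × Fin d) (Fin n × Fin d) ℂ), X.IsHermitian →
      cnormAmp S n X ≤ 1 → ‖ampFun E n X - X‖ ≤ k := by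
    intro n X hX hC
    have h := le_Costcb (Φ := E) hX hC
    rw [hκk] at h
    exact (ENNReal.ofReal_le_ofReal_iff hk0).mp h
  have costFin : ∀ (Ψ : Matrix (Fin d) (Fin d) ℂ → Matrix (Fin d) (Fin d) ℂ), IsUCP Ψ →
      (∀ x, Ψ (E x) = E x) → ∀ (n : ℕ) (X : Matrix (Fin n × Fin d) (Fin n × Fin d) ℂ),
      X.IsHermitian → cnormAmp S n X ≤ 1 → ‖ampFun Ψ n X - X‖ ≤ 2 * k := by
    intro Ψ hΨ hΨE n X hX hC
    have hEX : (ampFun E n X).IsHermitian := ampFun_herm_of_herm hE_herm hX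
    have hY : (X - ampFun E n X).IsHermitian := hX.sub hEX
    have hfix : ampFun Ψ n (ampFun E n X) = ampFun E n X := by
      rw [ampFun_comp, ampFun_congr hΨE]
    have hdecomp : ampFun Ψ n X - X = ampFun Ψ n (X - ampFun E n X) + (ampFun E n X - X) := by
      rw [ampFun_sub hΨ.map_add hΨ.map_smul, hfix]
      abel
    have h1 : ‖ampFun Ψ n (X - ampFun E n X)‖ ≤ ‖X - ampFun E n X‖ := ucp_amp_norm_le hΨ hY
    have h2 : ‖ampFun E n X - X‖ ≤ k := hEbound n X hX hC
    have h3 : ‖X - ampFun E n X‖ ≤ k := by rwa [norm_sub_rev]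
    calc ‖ampFun Ψ n X - X‖
        = ‖ampFun Ψ n (X - ampFun E n X) + (ampFun E n X - X)‖ := by rw [hdecomp]
      _ ≤ ‖ampFun Ψ n (X - ampFun E n X)‖ + ‖ampFun E n X - X‖ := norm_add_le _ _
      _ ≤ k + k := add_le_add (h1.trans h3) h2
      _ = 2 * k := by ring
  set M : ℝ := ((S.sup fun s => ‖s‖₊ : ℝ≥0) : ℝ) with hMdef
  have hM0 : 0 ≤ M := NNReal.coe_nonneg _
  have lipFin : ∀ (Ψ : Matrix (Fin d) (Fin d) ℂ → Matrix (Fin d) (Fin d) ℂ), IsUCP Ψ →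
      (∀ x, Ψ (E x) = E x) → Lipcb S Ψ ≤ ENNReal.ofReal (2 * M * (2 * k) + 1) := by
    intro Ψ hΨ hΨE
    refine Lipcb_le fun n X hX hC => ?_
    refine ENNReal.ofReal_le_ofReal ?_
    have hsplit : ampFun Ψ n X = (ampFun Ψ n X - X) + X := by abel
    calc cnormAmp S n (ampFun Ψ n X)
        = cnormAmp S n ((ampFun Ψ n X - X) + X) := by rw [← hsplit]
      _ ≤ cnormAmp S n (ampFun Ψ n X - X) + cnormAmp S n X := cnormAmp_add_le _ _
      _ ≤ 2 * M * ‖ampFun Ψ n X - X‖ + 1 :=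
          add_le_add (cnormAmp_le_two_mul_norm _) hC
      _ ≤ 2 * M * (2 * k) + 1 := by
          have := costFin Ψ hΨ hΨE n X hX hC
          nlinarith [hM0]
  have hCost₁fin : Costcb S Φ₁ ≤ ENNReal.ofReal (2 * k) :=
    Costcb_le fun n X hX hC => ENNReal.ofReal_le_ofReal (costFin Φ₁ hΦ₁ hΦ₁E n X hX hC)
  have hCost₂fin : Costcb S Φ₂ ≤ ENNReal.ofReal (2 * k) :=
    Costcb_le fun n X hX hC => ENNReal.ofReal_le_ofReal (costFin Φ₂ hΦ₂ hΦ₂E n X hX hC)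
  -- useful cast
  have hM' : ENNReal.ofReal (2 * M) = 2 * ((S.sup fun s => ‖s‖₊ : ℝ≥0) : ℝ≥0∞) := by
    rw [ENNReal.ofReal_mul (by norm_num : (0:ℝ) ≤ 2), ENNReal.ofReal_ofNat, hMdef,
      ENNReal.ofReal_coe_nnreal]
  refine ⟨⟨ne_top_of_le_ne_top ENNReal.ofReal_ne_top hCost₁fin,
      ne_top_of_le_ne_top ENNReal.ofReal_ne_top hCost₂fin,
      ne_top_of_le_ne_top ENNReal.ofReal_ne_top (lipFin Φ₁ hΦ₁ hΦ₁E),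
      ne_top_of_le_ne_top ENNReal.ofReal_ne_top (lipFin Φ₂ hΦ₂ hΦ₂E)⟩, ?_, ?_, ?_, ?_⟩
  · -- Costcb Φ₂ ≤ Costcb Φ₁ + κ ν
    refine Costcb_le fun n X hX hC => ?_
    have hsplit : ampFun Φ₂ n X - X
        = (ampFun Φ₁ n X - X) - ampFun (fun x => Φ₁ x - Φ₂ x) n X := by
      rw [ampFun_pt_sub]
      abel
    calc ENNReal.ofReal ‖ampFun Φ₂ n X - X‖
        = ENNReal.ofReal ‖(ampFun Φ₁ n X - X) - ampFun (fun x => Φ₁ x - Φ₂ x) n X‖ := by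
          rw [← hsplit]
      _ ≤ ENNReal.ofReal (‖ampFun Φ₁ n X - X‖ + ‖ampFun (fun x => Φ₁ x - Φ₂ x) n X‖) :=
          ENNReal.ofReal_le_ofReal (norm_sub_le _ _)
      _ ≤ ENNReal.ofReal ‖ampFun Φ₁ n X - X‖
          + ENNReal.ofReal ‖ampFun (fun x => Φ₁ x - Φ₂ x) n X‖ := ENNReal.ofReal_add_le
      _ ≤ Costcb S Φ₁ + Costcb S E * cbNorm (fun x => Φ₁ x - Φ₂ x) :=
          add_le_add (le_Costcb hX hC) (keyΘ n X hX hC)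
  · -- Costcb Φ₁ ≤ Costcb Φ₂ + κ ν
    refine Costcb_le fun n X hX hC => ?_
    have hsplit : ampFun Φ₁ n X - X
        = (ampFun Φ₂ n X - X) + ampFun (fun x => Φ₁ x - Φ₂ x) n X := by
      rw [ampFun_pt_sub]
      abel
    calc ENNReal.ofReal ‖ampFun Φ₁ n X - X‖
        = ENNReal.ofReal ‖(ampFun Φ₂ n X - X) + ampFun (fun x => Φ₁ x - Φ₂ x) n X‖ := by
          rw [← hsplit]
      _ ≤ ENNReal.ofReal (‖ampFun Φ₂ n X - X‖ + ‖ampFun (fun x => Φ₁ x - Φ₂ x) n X‖) :=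
          ENNReal.ofReal_le_ofReal (norm_add_le _ _)
      _ ≤ ENNReal.ofReal ‖ampFun Φ₂ n X - X‖
          + ENNReal.ofReal ‖ampFun (fun x => Φ₁ x - Φ₂ x) n X‖ := ENNReal.ofReal_add_le
      _ ≤ Costcb S Φ₂ + Costcb S E * cbNorm (fun x => Φ₁ x - Φ₂ x) :=
          add_le_add (le_Costcb hX hC) (keyΘ n X hX hC)
  · -- Lipcb Φ₂ ≤ Lipcb Φ₁ + 2 M κ ν
    refine Lipcb_le fun n X hX hC => ?_
    have hsplit : ampFun Φ₂ n X = ampFun Φ₁ n X - ampFun (fun x => Φ₁ x - Φ₂ x) n X := by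
      rw [ampFun_pt_sub]
      abel
    calc ENNReal.ofReal (cnormAmp S n (ampFun Φ₂ n X))
        = ENNReal.ofReal (cnormAmp S n (ampFun Φ₁ n X - ampFun (fun x => Φ₁ x - Φ₂ x) n X)) := by
          rw [← hsplit]
      _ ≤ ENNReal.ofReal (cnormAmp S n (ampFun Φ₁ n X)
          + cnormAmp S n (ampFun (fun x => Φ₁ x - Φ₂ x) n X)) :=
          ENNReal.ofReal_le_ofReal (cnormAmp_sub_le _ _)
      _ ≤ ENNReal.ofReal (cnormAmp S n (ampFun Φ₁ n X))
          + ENNReal.ofReal (cnormAmp S n (ampFun (fun x => Φ₁ x - Φ₂ x) n X)) :=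
          ENNReal.ofReal_add_le
      _ ≤ Lipcb S Φ₁ + ENNReal.ofReal (2 * M * ‖ampFun (fun x => Φ₁ x - Φ₂ x) n X‖) :=
          add_le_add (le_Lipcb hX hC) (ENNReal.ofReal_le_ofReal (cnormAmp_le_two_mul_norm _))
      _ ≤ Lipcb S Φ₁ + 2 * ((S.sup fun s => ‖s‖₊ : ℝ≥0) : ℝ≥0∞) * Costcb S E
          * cbNorm (fun x => Φ₁ x - Φ₂ x) := by
          refine add_le_add le_rfl ?_
          rw [show (2 : ℝ) * M * ‖ampFun (fun x => Φ₁ x - Φ₂ x) n X‖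
            = (2 * M) * ‖ampFun (fun x => Φ₁ x - Φ₂ x) n X‖ by ring,
            ENNReal.ofReal_mul (by positivity), hM']
          calc 2 * ((S.sup fun s => ‖s‖₊ : ℝ≥0) : ℝ≥0∞)
              * ENNReal.ofReal ‖ampFun (fun x => Φ₁ x - Φ₂ x) n X‖
              ≤ 2 * ((S.sup fun s => ‖s‖₊ : ℝ≥0) : ℝ≥0∞)
                * (Costcb S E * cbNorm (fun x => Φ₁ x - Φ₂ x)) :=
                mul_le_mul' le_rfl (keyΘ n X hX hC)
            _ = 2 * ((S.sup fun s => ‖s‖₊ : ℝ≥0) : ℝ≥0∞) * Costcb S E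
                * cbNorm (fun x => Φ₁ x - Φ₂ x) := by ring
  · -- Lipcb Φ₁ ≤ Lipcb Φ₂ + 2 M κ ν
    refine Lipcb_le fun n X hX hC => ?_
    have hsplit : ampFun Φ₁ n X = ampFun Φ₂ n X + ampFun (fun x => Φ₁ x - Φ₂ x) n X := by
      rw [ampFun_pt_sub]
      abel
    calc ENNReal.ofReal (cnormAmp S n (ampFun Φ₁ n X))
        = ENNReal.ofReal (cnormAmp S n (ampFun Φ₂ n X + ampFun (fun x => Φ₁ x - Φ₂ x) n X)) := by
          rw [← hsplit]
      _ ≤ ENNReal.ofReal (cnormAmp S n (ampFun Φ₂ n X)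
          + cnormAmp S n (ampFun (fun x => Φ₁ x - Φ₂ x) n X)) :=
          ENNReal.ofReal_le_ofReal (cnormAmp_add_le _ _)
      _ ≤ ENNReal.ofReal (cnormAmp S n (ampFun Φ₂ n X))
          + ENNReal.ofReal (cnormAmp S n (ampFun (fun x => Φ₁ x - Φ₂ x) n X)) :=
          ENNReal.ofReal_add_le
      _ ≤ Lipcb S Φ₂ + ENNReal.ofReal (2 * M * ‖ampFun (fun x => Φ₁ x - Φ₂ x) n X‖) :=
          add_le_add (le_Lipcb hX hC) (ENNReal.ofReal_le_ofReal (cnormAmp_le_two_mul_norm _))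
      _ ≤ Lipcb S Φ₂ + 2 * ((S.sup fun s => ‖s‖₊ : ℝ≥0) : ℝ≥0∞) * Costcb S E
          * cbNorm (fun x => Φ₁ x - Φ₂ x) := by
          refine add_le_add le_rfl ?_
          rw [show (2 : ℝ) * M * ‖ampFun (fun x => Φ₁ x - Φ₂ x) n X‖
            = (2 * M) * ‖ampFun (fun x => Φ₁ x - Φ₂ x) n X‖ by ring,
            ENNReal.ofReal_mul (by positivity), hM']
          calc 2 * ((S.sup fun s => ‖s‖₊ : ℝ≥0) : ℝ≥0∞)
              * ENNReal.ofReal ‖ampFun (fun x => Φ₁ x - Φ₂ x) n X‖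
              ≤ 2 * ((S.sup fun s => ‖s‖₊ : ℝ≥0) : ℝ≥0∞)
                * (Costcb S E * cbNorm (fun x => Φ₁ x - Φ₂ x)) :=
                mul_le_mul' le_rfl (keyΘ n X hX hC)
            _ = 2 * ((S.sup fun s => ‖s‖₊ : ℝ≥0) : ℝ≥0∞) * Costcb S E
                * cbNorm (fun x => Φ₁ x - Φ₂ x) := by ring


end
end

section
/- Let G be a finite group and S ⊆ G a symmetric generating set (S = S⁻¹ and S generates G). Define the word length ℓ_S : G → ℕ by ℓ_S(e) = 0 and, for g ≠ e, ℓ_S(g) = min{ n ≥ 1 : g = s₁s₂⋯s_n with each sᵢ ∈ S }. Then sup{ max_{g∈G} | f(g) − (1/|G|)·∑_{h∈G} f(h) | : f : G → ℝ with |f(sg) − f(g)| ≤ 1 for all s ∈ S and g ∈ G } = (1/|G|)·∑_{g∈G} ℓ_S(g). That is, the transportation cost of the averaging conditional expectation E_fix(f) = ((1/|G|)∑_{h∈G} f(h))·1_G, with respect to the Lipschitz seminorm |||f|||_S = max_{s∈S,g∈G} |f(sg) − f(g)|, equals the expected word length of G with respect to S. -/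
noncomputable section

/-- The word length of `g` with respect to a generating set `S`: the least `n` such that
`g` is a product of `n` elements of `S` (so `ℓ_S(e) = 0`, via the empty product). -/
def wordLength {G : Type*} [Group G] (S : Set G) (g : G) : ℕ :=
  sInf {n : ℕ | ∃ l : List G, (∀ x ∈ l, x ∈ S) ∧ l.length = n ∧ l.prod = g}

section Aux

variable {G : Type*} [Group G] {S : Set G}

lemma wordLength_set_nonempty (hS_symm : ∀ s ∈ S, s⁻¹ ∈ S)
    (hS_gen : Subgroup.closure S = ⊤) (g : G) :
    {n : ℕ | ∃ l : List G, (∀ x ∈ l, x ∈ S) ∧ l.length = n ∧ l.prod = g}.Nonempty := by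
  have hg : g ∈ Submonoid.closure (S ∪ S⁻¹) := by
    rw [← Subgroup.closure_toSubmonoid]
    simp [hS_gen]
  obtain ⟨l, hl, hprod⟩ := Submonoid.exists_list_of_mem_closure hg
  refine ⟨l.length, l, fun x hx => ?_, rfl, hprod⟩
  rcases hl x hx with h | h
  · exact h
  · simpa using hS_symm _ h

lemma wordLength_spec (hS_symm : ∀ s ∈ S, s⁻¹ ∈ S)
    (hS_gen : Subgroup.closure S = ⊤) (g : G) :
    ∃ l : List G, (∀ x ∈ l, x ∈ S) ∧ l.length = wordLength S g ∧ l.prod = g :=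
  Nat.sInf_mem (wordLength_set_nonempty hS_symm hS_gen g)

lemma wordLength_le (g : G) {l : List G} (hl : ∀ x ∈ l, x ∈ S) (hprod : l.prod = g) :
    wordLength S g ≤ l.length :=
  Nat.sInf_le ⟨l, hl, rfl, hprod⟩

lemma wordLength_one : wordLength S (1 : G) = 0 :=
  Nat.le_zero.mp (wordLength_le 1 (l := []) (by simp) (by simp))

/-- key Lipschitz estimate along a word -/
lemma abs_sub_le_list {f : G → ℝ} (hf : ∀ s ∈ S, ∀ g : G, |f (s * g) - f g| ≤ 1)
    (l : List G) (hl : ∀ x ∈ l, x ∈ S) (h : G) :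
    |f (l.prod * h) - f h| ≤ (l.length : ℝ) := by
  induction l with
  | nil => simp
  | cons s t ih =>
    have hs : s ∈ S := hl s (by simp)
    have ht : ∀ x ∈ t, x ∈ S := fun x hx => hl x (by simp [hx])
    have h1 := hf s hs (t.prod * h)
    have h2 := ih ht
    have : |f (s * (t.prod * h)) - f h| ≤ 1 + t.length := by
      calc |f (s * (t.prod * h)) - f h|
          ≤ |f (s * (t.prod * h)) - f (t.prod * h)| + |f (t.prod * h) - f h| := abs_sub_le _ _ _
        _ ≤ 1 + t.length := add_le_add h1 h2
    simpa [mul_assoc, add_comm] using this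

lemma abs_sub_le_wordLength (hS_symm : ∀ s ∈ S, s⁻¹ ∈ S)
    (hS_gen : Subgroup.closure S = ⊤) {f : G → ℝ}
    (hf : ∀ s ∈ S, ∀ g : G, |f (s * g) - f g| ≤ 1) (g h : G) :
    |f g - f h| ≤ (wordLength S (g * h⁻¹) : ℝ) := by
  obtain ⟨l, hl, hlen, hprod⟩ := wordLength_spec hS_symm hS_gen (g * h⁻¹)
  have := abs_sub_le_list hf l hl h
  rw [hprod, hlen] at this
  simpa using this

lemma wordLength_lipschitz (hS_symm : ∀ s ∈ S, s⁻¹ ∈ S)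
    (hS_gen : Subgroup.closure S = ⊤) (s : G) (hs : s ∈ S) (g : G) :
    |((wordLength S (s * g) : ℝ)) - (wordLength S g : ℝ)| ≤ 1 := by
  obtain ⟨l, hl, hlen, hprod⟩ := wordLength_spec hS_symm hS_gen g
  have h1 : wordLength S (s * g) ≤ wordLength S g + 1 := by
    have := wordLength_le (S := S) (s * g) (l := s :: l)
      (by rintro x hx; rcases List.mem_cons.mp hx with rfl | hx
          exacts [hs, hl x hx]) (by simp [hprod])
    simpa [hlen] using this
  obtain ⟨m, hm, hmlen, hmprod⟩ := wordLength_spec hS_symm hS_gen (s * g)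
  have h2 : wordLength S g ≤ wordLength S (s * g) + 1 := by
    have := wordLength_le (S := S) g (l := s⁻¹ :: m)
      (by rintro x hx; rcases List.mem_cons.mp hx with rfl | hx
          exacts [hS_symm s hs, hm x hx]) (by simp [hmprod])
    simpa [hmlen] using this
  rw [abs_sub_le_iff]
  constructor <;> push_cast [← Nat.cast_le (α := ℝ)] at h1 h2 <;> linarith

end Aux

/-- For a finite group `G` with a symmetric generating set `S`, the
transportation cost of the averaging conditional expectation
`E_fix(f) = (1/|G|) ∑_h f(h)` with respect to the Lipschitz seminorm
`|||f|||_S = max_{s∈S,g∈G} |f(sg) − f(g)|` equals the expected word length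
`(1/|G|) ∑_g ℓ_S(g)`. -/
theorem cost_averaging_eq_expected_word_length {G : Type*} [Group G] [Fintype G]
    (S : Set G) (hS_symm : ∀ s ∈ S, s⁻¹ ∈ S) (hS_gen : Subgroup.closure S = ⊤) :
    sSup {r : ℝ | ∃ f : G → ℝ,
        (∀ s ∈ S, ∀ g : G, |f (s * g) - f g| ≤ 1) ∧
        r = ⨆ g : G, |f g - (∑ h : G, f h) / (Fintype.card G : ℝ)|}
      = (∑ g : G, (wordLength S g : ℝ)) / (Fintype.card G : ℝ) := by
  set n : ℝ := (Fintype.card G : ℝ) with hn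
  have hnpos : (0 : ℝ) < n := by positivity
  set W : ℝ := (∑ g : G, (wordLength S g : ℝ)) / n with hW
  -- change of variables
  have hsum : ∀ g : G, ∑ h : G, (wordLength S (g * h⁻¹) : ℝ)
      = ∑ k : G, (wordLength S k : ℝ) := by
    intro g
    apply Fintype.sum_equiv ((Equiv.inv G).trans (Equiv.mulLeft g))
    intro h; rfl
  -- upper bound for every Lipschitz f and every g
  have key : ∀ (f : G → ℝ), (∀ s ∈ S, ∀ g : G, |f (s * g) - f g| ≤ 1) →
      ∀ g : G, |f g - (∑ h : G, f h) / n| ≤ W := by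
    intro f hf g
    have : f g - (∑ h : G, f h) / n = (∑ h : G, (f g - f h)) / n := by
      rw [Finset.sum_sub_distrib, sub_div, Finset.sum_const, Finset.card_univ, nsmul_eq_mul]
      rw [← hn, mul_comm, mul_div_assoc, div_self hnpos.ne', mul_one]
    rw [this, hW, abs_div, abs_of_pos hnpos, div_le_div_iff_of_pos_right hnpos]
    calc |∑ h : G, (f g - f h)| ≤ ∑ h : G, |f g - f h| := Finset.abs_sum_le_sum_abs _ _
      _ ≤ ∑ h : G, (wordLength S (g * h⁻¹) : ℝ) :=
          Finset.sum_le_sum fun h _ => abs_sub_le_wordLength hS_symm hS_gen hf g h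
      _ = ∑ k : G, (wordLength S k : ℝ) := hsum g
  have hub : ∀ r ∈ {r : ℝ | ∃ f : G → ℝ,
      (∀ s ∈ S, ∀ g : G, |f (s * g) - f g| ≤ 1) ∧
      r = ⨆ g : G, |f g - (∑ h : G, f h) / (Fintype.card G : ℝ)|}, r ≤ W := by
    rintro r ⟨f, hf, rfl⟩
    exact ciSup_le fun g => key f hf g
  apply le_antisymm
  · apply csSup_le
    · exact ⟨_, (0 : G → ℝ), by simp, rfl⟩
    · exact hub
  · -- the word length itself is a witness
    set f : G → ℝ := fun g => (wordLength S g : ℝ) with hfdef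
    have hf : ∀ s ∈ S, ∀ g : G, |f (s * g) - f g| ≤ 1 :=
      fun s hs g => wordLength_lipschitz hS_symm hS_gen s hs g
    refine le_csSup_of_le ⟨W, hub⟩ ⟨f, hf, rfl⟩ ?_
    have h0 : |f 1 - (∑ h : G, f h) / n| = W := by
      have hWnn : 0 ≤ W := by
        rw [hW]; positivity
      have : f 1 = 0 := by simp [hfdef, wordLength_one]
      rw [this, hW]
      rw [abs_of_nonpos (by
        simpa using div_nonneg (Finset.sum_nonneg fun h _ => by
          simp [hfdef]) hnpos.le)]
      simp [hfdef]
    calc W = |f 1 - (∑ h : G, f h) / n| := h0.symm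
      _ ≤ ⨆ g : G, |f g - (∑ h : G, f h) / (Fintype.card G : ℝ)| :=
        le_ciSup (f := fun g : G => |f g - (∑ h : G, f h) / (Fintype.card G : ℝ)|)
          (Set.Finite.bddAbove (Set.finite_range _)) 1
end
end

section
/- Let σ ∈ M_d be a positive definite density matrix and let ρ : ℝ → M_d be a continuously differentiable family such that ρ(t) is a positive definite density matrix (Hermitian, positive definite, trace 1) for every t in a neighborhood of 0. Then the function t ↦ D(ρ(t) ‖ σ) is differentiable at 0 and its derivative satisfies (d/dt) D(ρ(t) ‖ σ) |_{t=0} = tr( ρ′(0) · (log ρ(0) − log σ) ), where log denotes the spectral functional-calculus logarithm of positive definite Hermitian matrices. -/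
open scoped ENNReal NNReal ComplexOrder Matrix Matrix.Norms.L2Operator

noncomputable section

/-- Matrix logarithm of a (positive definite Hermitian) matrix, via the spectral
continuous functional calculus. -/
def mlog {ι : Type*} [Fintype ι] [DecidableEq ι] (a : Matrix ι ι ℂ) : Matrix ι ι ℂ :=
  cfc Real.log a

/-- `tr(ρ log ρ)`, defined via functional calculus applied to `x ↦ x log x`
(which vanishes at `0`). -/
def traceEnt {ι : Type*} [Fintype ι] [DecidableEq ι] (ρ : Matrix ι ι ℂ) : ℝ :=
  (cfc (fun x : ℝ => x * Real.log x) ρ).trace.re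

/-- Umegaki relative entropy `D(ρ‖σ) = tr(ρ log ρ) − tr(ρ log σ)` (for `σ` positive
definite). -/
def relEnt {ι : Type*} [Fintype ι] [DecidableEq ι] (ρ σ : Matrix ι ι ℂ) : ℝ :=
  traceEnt ρ - (ρ * mlog σ).trace.re

lemma scalar_lb (x lam : ℝ) (hx : 0 < x) (hlam : 0 < lam) :
    lam * Real.log lam + (Real.log lam + 1) * (x - lam) ≤ x * Real.log x := by
  have h1 : Real.log lam - Real.log x ≤ lam / x - 1 := by
    rw [← Real.log_div hlam.ne' hx.ne']
    exact Real.log_le_sub_one_of_pos (by positivity)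
  have h2 := mul_le_mul_of_nonneg_left h1 hx.le
  have h3 : x * (lam / x) = lam := by field_simp
  nlinarith

lemma scalar_ub (x lam ε : ℝ) (hx : 0 < x) (hε : 0 < ε) (hlam : ε ≤ lam) :
    x * Real.log x ≤ lam * Real.log lam + (Real.log lam + 1) * (x - lam) + ε⁻¹ * (x - lam)^2 := by
  have hlam0 : 0 < lam := lt_of_lt_of_le hε hlam
  have h1 : Real.log x - Real.log lam ≤ x / lam - 1 := by
    rw [← Real.log_div hx.ne' hlam0.ne']
    exact Real.log_le_sub_one_of_pos (by positivity)
  have h2 := mul_le_mul_of_nonneg_left h1 hx.le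
  have h4 : x * (x / lam - 1) = (x - lam)^2 / lam + (x - lam) := by field_simp; ring
  have h5 : (x - lam)^2 / lam ≤ ε⁻¹ * (x - lam)^2 := by
    rw [div_eq_mul_inv, mul_comm]
    exact mul_le_mul_of_nonneg_right (by exact inv_anti₀ hε hlam) (sq_nonneg _)
  nlinarith

variable {d : ℕ} {B : Matrix (Fin d) (Fin d) ℂ}

lemma cfc_sub_posSemidef (hB : B.IsHermitian) {f g : ℝ → ℝ}
    (h : ∀ i, g (hB.eigenvalues i) ≤ f (hB.eigenvalues i)) :
    (cfc f B - cfc g B).PosSemidef := by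
  rw [hB.cfc_eq f, hB.cfc_eq g]
  unfold Matrix.IsHermitian.cfc
  rw [Unitary.conjStarAlgAut_apply, Unitary.conjStarAlgAut_apply,
    ← sub_mul, ← Matrix.mul_sub, Matrix.diagonal_sub, Matrix.star_eq_conjTranspose]
  refine Matrix.PosSemidef.mul_mul_conjTranspose_same ?_ _
  rw [Matrix.posSemidef_diagonal_iff]
  intro i
  simp only [Pi.sub_apply, Function.comp_apply]
  rw [sub_nonneg]
  exact_mod_cast h i

namespace RelEntAux

variable {d : ℕ}

def Tdiag (U M : Matrix (Fin d) (Fin d) ℂ) (i : Fin d) : ℂ := (star U * M * U) i i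

lemma Tdiag_add (U M N : Matrix (Fin d) (Fin d) ℂ) (i : Fin d) :
    Tdiag U (M + N) i = Tdiag U M i + Tdiag U N i := by
  simp [Tdiag, Matrix.mul_add, Matrix.add_mul]

lemma Tdiag_sub (U M N : Matrix (Fin d) (Fin d) ℂ) (i : Fin d) :
    Tdiag U (M - N) i = Tdiag U M i - Tdiag U N i := by
  simp [Tdiag, Matrix.mul_sub, Matrix.sub_mul]

lemma Tdiag_smul (U : Matrix (Fin d) (Fin d) ℂ) (r : ℝ) (M : Matrix (Fin d) (Fin d) ℂ)
    (i : Fin d) : Tdiag U (r • M) i = r • Tdiag U M i := by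
  simp [Tdiag, Matrix.mul_smul, Matrix.smul_mul]

lemma Tdiag_one (U : Matrix (Fin d) (Fin d) ℂ) (hU : star U * U = 1) (i : Fin d) :
    Tdiag U 1 i = 1 := by
  simp [Tdiag, hU, Matrix.one_apply_eq]

lemma Tdiag_psd {U M : Matrix (Fin d) (Fin d) ℂ} (hM : M.PosSemidef) (i : Fin d) :
    0 ≤ (Tdiag U M i).re := by
  have hP : (star U * M * U).PosSemidef := by
    have := hM.conjTranspose_mul_mul_same U
    rwa [Matrix.star_eq_conjTranspose]
  have := hP.re_dotProduct_nonneg (Pi.single i 1)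
  simpa [Tdiag, dotProduct, Matrix.mulVec, Pi.single_apply] using this

lemma trace_conj (U : Matrix (Fin d) (Fin d) ℂ) (hU : U * star U = 1)
    (M : Matrix (Fin d) (Fin d) ℂ) : (star U * M * U).trace = M.trace := by
  rw [Matrix.trace_mul_cycle, hU, Matrix.one_mul]

lemma Tdiag_trace (U : Matrix (Fin d) (Fin d) ℂ) (hU : U * star U = 1)
    (M : Matrix (Fin d) (Fin d) ℂ) : ∑ i, Tdiag U M i = M.trace := by
  rw [← trace_conj U hU M]; rfl

lemma trace_diagonal_mul (v : Fin d → ℂ) (M : Matrix (Fin d) (Fin d) ℂ) :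
    (Matrix.diagonal v * M).trace = ∑ i, v i * M i i := by
  simp [Matrix.trace, Matrix.diag, Matrix.mul_apply, Matrix.diagonal_apply, Finset.sum_ite_eq]

end RelEntAux

namespace RelEntAux

lemma contOn (f : ℝ → ℝ) {d : ℕ} (M : Matrix (Fin d) (Fin d) ℂ) :
    ContinuousOn f (spectrum ℝ M) := by
  have : Finite (spectrum ℝ M) := M.finite_real_spectrum
  rw [continuousOn_iff_continuous_restrict]
  exact continuous_of_discreteTopology

variable {d : ℕ} {A : Matrix (Fin d) (Fin d) ℂ} (hA : A.IsHermitian)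

lemma cfc_herm (g : ℝ → ℝ) : cfc g A =
    (hA.eigenvectorUnitary : Matrix (Fin d) (Fin d) ℂ) *
      Matrix.diagonal (RCLike.ofReal ∘ g ∘ hA.eigenvalues) *
      star (hA.eigenvectorUnitary : Matrix (Fin d) (Fin d) ℂ) := by
  rw [hA.cfc_eq g]; rfl

lemma trace_cfc (g : ℝ → ℝ) : (cfc g A).trace = ∑ i, (g (hA.eigenvalues i) : ℂ) := by
  rw [cfc_herm hA g, Matrix.trace_mul_cycle,
    Matrix.UnitaryGroup.star_mul_self, Matrix.one_mul, Matrix.trace_diagonal]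
  rfl

lemma trace_cfc_mul (g : ℝ → ℝ) (M : Matrix (Fin d) (Fin d) ℂ) :
    ((cfc g A) * M).trace
      = ∑ i, (g (hA.eigenvalues i) : ℂ) * Tdiag (hA.eigenvectorUnitary) M i := by
  rw [cfc_herm hA g]
  have h1 : (hA.eigenvectorUnitary : Matrix (Fin d) (Fin d) ℂ) *
      Matrix.diagonal (RCLike.ofReal ∘ g ∘ hA.eigenvalues) *
      star (hA.eigenvectorUnitary : Matrix (Fin d) (Fin d) ℂ) * M
      = (hA.eigenvectorUnitary : Matrix (Fin d) (Fin d) ℂ) *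
        (Matrix.diagonal (RCLike.ofReal ∘ g ∘ hA.eigenvalues) *
          (star (hA.eigenvectorUnitary : Matrix (Fin d) (Fin d) ℂ) * M)) := by
    simp only [Matrix.mul_assoc]
  rw [h1, Matrix.trace_mul_comm, Matrix.mul_assoc, trace_diagonal_mul]
  refine Finset.sum_congr rfl fun i _ => ?_
  simp [Tdiag, Matrix.mul_assoc]

lemma Tdiag_self (i : Fin d) :
    Tdiag (hA.eigenvectorUnitary) A i = (hA.eigenvalues i : ℂ) := by
  unfold Tdiag
  have hsd := hA.conjStarAlgAut_star_eigenvectorUnitary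
  rw [Unitary.conjStarAlgAut_apply, Unitary.coe_star, star_star] at hsd
  rw [hsd]
  simp [Matrix.diagonal_apply_eq]

end RelEntAux

namespace RelEntAux

variable {d : ℕ} {A : Matrix (Fin d) (Fin d) ℂ}

lemma cfc_affine (hA : A.IsHermitian) (c₀ c₁ : ℝ) :
    cfc (fun x : ℝ => c₀ + c₁ * x) A = algebraMap ℝ _ c₀ + c₁ • A := by
  have ha := hA.isSelfAdjoint
  rw [cfc_const_add c₀ (fun x => c₁ * x) A (contOn _ A) ha, cfc_const_mul_id c₁ A ha]

lemma cfc_quad (hA : A.IsHermitian) (c₀ c₁ c₂ l : ℝ) :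
    cfc (fun x : ℝ => c₀ + c₁ * x + c₂ * (x - l) ^ 2) A
      = algebraMap ℝ _ c₀ + c₁ • A
        + c₂ • ((A - algebraMap ℝ _ l) * (A - algebraMap ℝ _ l)) := by
  have ha := hA.isSelfAdjoint
  have hs : cfc (fun x : ℝ => x - l) A = A - algebraMap ℝ _ l := by
    rw [cfc_sub (fun x : ℝ => x) (fun _ : ℝ => l) A (contOn _ A) (contOn _ A),
      cfc_id' ℝ A, cfc_const l A]
  have h2 : cfc (fun x : ℝ => (x - l) ^ 2) A
      = (A - algebraMap ℝ _ l) * (A - algebraMap ℝ _ l) := by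
    rw [cfc_pow (R := ℝ) (fun x : ℝ => x - l) 2 A (contOn _ A) ha, hs, sq]
  rw [cfc_add A (fun x : ℝ => c₀ + c₁ * x) (fun x : ℝ => c₂ * (x - l) ^ 2)
      (contOn _ A) (contOn _ A),
    cfc_affine hA c₀ c₁, cfc_const_mul c₂ (fun x : ℝ => (x - l) ^ 2) A (contOn _ A), h2]

end RelEntAux

namespace RelEntAux

lemma re_ofReal_mul (r : ℝ) (z : ℂ) : ((r : ℂ) * z).re = r * z.re := by
  simp [Complex.mul_re]

lemma key_sandwich {d : ℕ} {A B : Matrix (Fin d) (Fin d) ℂ}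
    (hA : A.PosDef) (hB : B.PosDef) {ε : ℝ} (hε : 0 < ε)
    (hεle : ∀ i, ε ≤ hA.1.eigenvalues i) :
    0 ≤ traceEnt B - traceEnt A
        - ((cfc (fun x : ℝ => Real.log x + 1) A) * (B - A)).trace.re ∧
    traceEnt B - traceEnt A - ((cfc (fun x : ℝ => Real.log x + 1) A) * (B - A)).trace.re
      ≤ ε⁻¹ * (((B - A) * (B - A)).trace).re := by
  have hAh := hA.1
  have hBh := hB.1
  set U : Matrix (Fin d) (Fin d) ℂ := (hAh.eigenvectorUnitary : Matrix (Fin d) (Fin d) ℂ)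
    with hUdef
  set lam := hAh.eigenvalues with hlamdef
  have hU1 : U * star U = 1 := Matrix.mem_unitaryGroup_iff.mp hAh.eigenvectorUnitary.2
  have hU2 : star U * U = 1 := Matrix.mem_unitaryGroup_iff'.mp hAh.eigenvectorUnitary.2
  have hlampos : ∀ i, 0 < lam i := fun i => hA.eigenvalues_pos i
  have hmupos : ∀ j, 0 < hBh.eigenvalues j := fun j => hB.eigenvalues_pos j
  set f : ℝ → ℝ := fun x => x * Real.log x with hfdef
  set c0 : Fin d → ℝ := fun i => lam i * Real.log (lam i) - (Real.log (lam i) + 1) * lam i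
    with hc0def
  set c1 : Fin d → ℝ := fun i => Real.log (lam i) + 1 with hc1def
  -- value of Tdiag on affine cfc
  have haff : ∀ i : Fin d, Tdiag U (cfc (fun x : ℝ => c0 i + c1 i * x) B) i
      = (c0 i : ℂ) + (c1 i : ℂ) * Tdiag U B i := by
    intro i
    rw [cfc_affine hBh (c0 i) (c1 i), Tdiag_add, Algebra.algebraMap_eq_smul_one,
      Tdiag_smul, Tdiag_one U hU2, Tdiag_smul]
    simp [Complex.real_smul]
  have hquad : ∀ i : Fin d,
      Tdiag U (cfc (fun x : ℝ => c0 i + c1 i * x + ε⁻¹ * (x - lam i) ^ 2) B) i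
      = (c0 i : ℂ) + (c1 i : ℂ) * Tdiag U B i
        + (ε⁻¹ : ℂ) * Tdiag U ((B - algebraMap ℝ _ (lam i)) * (B - algebraMap ℝ _ (lam i))) i := by
    intro i
    rw [cfc_quad hBh (c0 i) (c1 i) ε⁻¹ (lam i), Tdiag_add, Tdiag_add,
      Algebra.algebraMap_eq_smul_one (A := Matrix (Fin d) (Fin d) ℂ) (c0 i),
      Tdiag_smul, Tdiag_one U hU2, Tdiag_smul, Tdiag_smul]
    simp [Complex.real_smul]
  -- lower bound, per index
  have lower : ∀ i : Fin d,
      0 ≤ (Tdiag U (cfc f B) i).re - (c0 i + c1 i * (Tdiag U B i).re) := by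
    intro i
    have hg : ∀ j, (fun x : ℝ => c0 i + c1 i * x) (hBh.eigenvalues j)
        ≤ f (hBh.eigenvalues j) := by
      intro j
      have := scalar_lb (hBh.eigenvalues j) (lam i) (hmupos j) (hlampos i)
      simp only [hc0def, hc1def, hfdef]
      nlinarith [this]
    have hpsd := cfc_sub_posSemidef hBh (f := f) (g := fun x : ℝ => c0 i + c1 i * x) hg
    have h0 := Tdiag_psd (U := U) hpsd i
    rw [Tdiag_sub, haff i] at h0
    simpa [Complex.sub_re, Complex.add_re, re_ofReal_mul] using h0
  -- upper bound, per index
  have upper : ∀ i : Fin d,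
      (Tdiag U (cfc f B) i).re - (c0 i + c1 i * (Tdiag U B i).re)
        ≤ ε⁻¹ * (Tdiag U ((B - algebraMap ℝ _ (lam i)) * (B - algebraMap ℝ _ (lam i))) i).re := by
    intro i
    have hg : ∀ j, f (hBh.eigenvalues j)
        ≤ (fun x : ℝ => c0 i + c1 i * x + ε⁻¹ * (x - lam i) ^ 2) (hBh.eigenvalues j) := by
      intro j
      have := scalar_ub (hBh.eigenvalues j) (lam i) ε (hmupos j) hε (hεle i)
      simp only [hc0def, hc1def, hfdef]
      nlinarith [this]
    have hpsd := cfc_sub_posSemidef hBh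
      (f := fun x : ℝ => c0 i + c1 i * x + ε⁻¹ * (x - lam i) ^ 2) (g := f) hg
    have h0 := Tdiag_psd (U := U) hpsd i
    rw [Tdiag_sub, hquad i] at h0
    simp only [← Complex.ofReal_inv, Complex.sub_re, Complex.add_re, re_ofReal_mul, Complex.ofReal_re] at h0
    linarith
  have hAsa : IsSelfAdjoint A := hAh.isSelfAdjoint
  -- summation identities
  have hS : ∑ i, (Tdiag U (cfc f B) i).re = traceEnt B := by
    rw [← Complex.re_sum, Tdiag_trace U hU1]
    rfl
  have htrA : traceEnt A = ∑ i, lam i * Real.log (lam i) := by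
    show (cfc (fun x : ℝ => x * Real.log x) A).trace.re = _
    rw [trace_cfc hAh (fun x => x * Real.log x), Complex.re_sum]
    simp
    rfl
  have hlin : ((cfc (fun x : ℝ => Real.log x + 1) A) * (B - A)).trace.re
      = ∑ i, c1 i * ((Tdiag U B i).re - lam i) := by
    rw [trace_cfc_mul hAh (fun x => Real.log x + 1) (B - A), Complex.re_sum]
    simp only [← hUdef]
    refine Finset.sum_congr rfl fun i _ => ?_
    rw [Tdiag_sub, Tdiag_self hAh i]
    simp only [← hUdef, ← hlamdef, Complex.sub_re, re_ofReal_mul, Complex.ofReal_re, hc1def]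
  have hsplit : ∑ i, (c0 i + c1 i * (Tdiag U B i).re)
      = traceEnt A + ((cfc (fun x : ℝ => Real.log x + 1) A) * (B - A)).trace.re := by
    rw [htrA, hlin, ← Finset.sum_add_distrib]
    refine Finset.sum_congr rfl fun i _ => ?_
    simp only [hc0def, hc1def]
    ring
  have hlow : 0 ≤ traceEnt B - traceEnt A
      - ((cfc (fun x : ℝ => Real.log x + 1) A) * (B - A)).trace.re := by
    have h := Finset.sum_nonneg (fun i (_ : i ∈ Finset.univ) => lower i)
    rw [Finset.sum_sub_distrib, hS, hsplit] at h
    linarith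
  -- the quadratic sum identity
  have hAmul : ∀ M : Matrix (Fin d) (Fin d) ℂ,
      (A * M).trace = ∑ i, ((lam i : ℝ) : ℂ) * Tdiag U M i := by
    intro M
    conv_lhs => rw [← cfc_id ℝ A hAsa]
    rw [trace_cfc_mul hAh id M]
    simp only [← hUdef, ← hlamdef, id]
  have hX : ∀ i : Fin d, (B - algebraMap ℝ (Matrix (Fin d) (Fin d) ℂ) (lam i))
        * (B - algebraMap ℝ (Matrix (Fin d) (Fin d) ℂ) (lam i))
      = B * B - (2 * lam i) • B + (lam i * lam i) • (1 : Matrix (Fin d) (Fin d) ℂ) := by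
    intro i
    rw [Algebra.algebraMap_eq_smul_one]
    simp only [Matrix.sub_mul, Matrix.mul_sub, Matrix.smul_mul, Matrix.mul_smul,
      Matrix.one_mul, Matrix.mul_one, smul_smul]
    module
  have hq : ∑ i, (Tdiag U ((B - algebraMap ℝ (Matrix (Fin d) (Fin d) ℂ) (lam i))
        * (B - algebraMap ℝ (Matrix (Fin d) (Fin d) ℂ) (lam i))) i).re
      = (((B - A) * (B - A)).trace).re := by
    have hL : ∀ i : Fin d, (Tdiag U ((B - algebraMap ℝ (Matrix (Fin d) (Fin d) ℂ) (lam i))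
          * (B - algebraMap ℝ (Matrix (Fin d) (Fin d) ℂ) (lam i))) i).re
        = (Tdiag U (B * B) i).re - 2 * lam i * (Tdiag U B i).re + lam i * lam i := by
      intro i
      rw [hX i, Tdiag_add, Tdiag_sub, Tdiag_smul, Tdiag_smul, Tdiag_one U hU2]
      simp [Complex.real_smul, Complex.add_re, Complex.sub_re, re_ofReal_mul]
    have hR : (B - A) * (B - A) = B * B - B * A - A * B + A * A := by
      simp only [Matrix.sub_mul, Matrix.mul_sub]
      abel
    have htrBB : ∑ i, Tdiag U (B * B) i = (B * B).trace := Tdiag_trace U hU1 _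
    have htrAB : (A * B).trace = ∑ i, ((lam i : ℝ) : ℂ) * Tdiag U B i := hAmul B
    have htrBA : (B * A).trace = (A * B).trace := Matrix.trace_mul_comm B A
    have htrAA : (A * A).trace = ∑ i, ((lam i : ℝ) : ℂ) * ((lam i : ℝ) : ℂ) := by
      rw [hAmul A]
      refine Finset.sum_congr rfl fun i _ => ?_
      rw [Tdiag_self hAh i]
    rw [hR]
    simp only [Matrix.trace_add, Matrix.trace_sub, Complex.add_re, Complex.sub_re,
      htrBA, htrAB, htrAA]
    simp only [Finset.sum_congr, hL]
    rw [Finset.sum_add_distrib, Finset.sum_sub_distrib, ← htrBB, Complex.re_sum,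
      Complex.re_sum, Complex.re_sum]
    simp only [re_ofReal_mul, Complex.ofReal_re]
    have h2 : ∑ x : Fin d, 2 * lam x * (Tdiag U B x).re
        = ∑ x : Fin d, lam x * (Tdiag U B x).re + ∑ x : Fin d, lam x * (Tdiag U B x).re := by
      rw [← Finset.sum_add_distrib]
      exact Finset.sum_congr rfl fun i _ => by ring
    linarith
  have hup : traceEnt B - traceEnt A
        - ((cfc (fun x : ℝ => Real.log x + 1) A) * (B - A)).trace.re
      ≤ ε⁻¹ * (((B - A) * (B - A)).trace).re := by
    have h := Finset.sum_le_sum (fun i (_ : i ∈ Finset.univ) => upper i)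
    rw [Finset.sum_sub_distrib, hS, hsplit, ← Finset.mul_sum, hq] at h
    linarith
  exact ⟨hlow, hup⟩

end RelEntAux

namespace RelEntAux

variable {d : ℕ}

/-- `X ↦ ((M * X).trace).re` as a continuous `ℝ`-linear map. -/
def reTraceMulCLM (M : Matrix (Fin d) (Fin d) ℂ) : Matrix (Fin d) (Fin d) ℂ →L[ℝ] ℝ :=
  LinearMap.toContinuousLinearMap
    { toFun := fun X => ((M * X).trace).re
      map_add' := by intro X Y; simp [Matrix.mul_add]
      map_smul' := by
        intro r X
        simp [Matrix.mul_smul, Complex.real_smul, re_ofReal_mul] }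

@[simp] lemma reTraceMulCLM_apply (M X : Matrix (Fin d) (Fin d) ℂ) :
    reTraceMulCLM M X = ((M * X).trace).re := rfl

/-- `X ↦ ((X * M).trace).re` as a continuous `ℝ`-linear map. -/
def reMulTraceCLM (M : Matrix (Fin d) (Fin d) ℂ) : Matrix (Fin d) (Fin d) ℂ →L[ℝ] ℝ :=
  LinearMap.toContinuousLinearMap
    { toFun := fun X => ((X * M).trace).re
      map_add' := by intro X Y; simp [Matrix.add_mul]
      map_smul' := by
        intro r X
        simp [Matrix.smul_mul, Complex.real_smul, re_ofReal_mul] }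

@[simp] lemma reMulTraceCLM_apply (M X : Matrix (Fin d) (Fin d) ℂ) :
    reMulTraceCLM M X = ((X * M).trace).re := rfl

/-- trace as a continuous `ℝ`-linear map. -/
def traceCLM (d : ℕ) : Matrix (Fin d) (Fin d) ℂ →L[ℝ] ℂ :=
  LinearMap.toContinuousLinearMap
    { toFun := fun X => X.trace
      map_add' := by intro X Y; simp
      map_smul' := by intro r X; simp }

@[simp] lemma traceCLM_apply (X : Matrix (Fin d) (Fin d) ℂ) : traceCLM d X = X.trace := rfl

end RelEntAux

open RelEntAux Filter in
/-- Derivative of the relative entropy: if `σ` is a positive definite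
density matrix and `ρ : ℝ → M_d` is a `C¹` family of positive definite density matrices
near `0`, then `t ↦ D(ρ(t)‖σ)` is differentiable at `0` with derivative
`tr(ρ′(0)·(log ρ(0) − log σ))`. -/
theorem hasDerivAt_relEnt {d : ℕ}
    (σ : Matrix (Fin d) (Fin d) ℂ) (hσ : σ.PosDef) (hσtr : σ.trace = 1)
    (ρ : ℝ → Matrix (Fin d) (Fin d) ℂ)
    (hρ : ContDiff ℝ 1 ρ)
    (hρd : ∀ᶠ t in nhds (0 : ℝ), (ρ t).PosDef ∧ (ρ t).trace = 1) :
    HasDerivAt (fun t => relEnt (ρ t) σ)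
      ((deriv ρ 0 * (mlog (ρ 0) - mlog σ)).trace.re) 0 := by
  have h0 : (ρ 0).PosDef ∧ (ρ 0).trace = 1 := hρd.self_of_nhds
  set A := ρ 0 with hAdef
  have hAsa : IsSelfAdjoint A := h0.1.1.isSelfAdjoint
  -- a uniform lower bound on the eigenvalues of `A`
  obtain ⟨ε, hε, hεle⟩ : ∃ ε > (0:ℝ), ∀ i, ε ≤ h0.1.1.eigenvalues i := by
    rcases isEmpty_or_nonempty (Fin d) with hd | hd
    · exact ⟨1, one_pos, fun i => isEmptyElim i⟩
    · obtain ⟨i0, -, hmin⟩ := Finset.exists_min_image Finset.univ h0.1.1.eigenvalues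
        ⟨Classical.arbitrary _, Finset.mem_univ _⟩
      exact ⟨h0.1.1.eigenvalues i0, h0.1.eigenvalues_pos i0,
        fun i => hmin i (Finset.mem_univ i)⟩
  have hρdiff : HasDerivAt ρ (deriv ρ 0) 0 :=
    ((hρ.differentiable one_ne_zero) 0).hasDerivAt
  set D := deriv ρ 0 with hDdef
  -- trace of the derivative vanishes
  have htr0 : D.trace = 0 := by
    have h1 : HasDerivAt (fun t => (ρ t).trace) (D.trace) 0 := by
      have := (traceCLM d).hasFDerivAt.comp_hasDerivAt 0 hρdiff
      simpa [Function.comp_def] using this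
    have h2 : HasDerivAt (fun t => (ρ t).trace) 0 0 := by
      refine (hasDerivAt_const (0:ℝ) (1:ℂ)).congr_of_eventuallyEq ?_
      exact hρd.mono fun t ht => ht.2
    exact h1.unique h2
  -- derivative of the difference
  have hδ : HasDerivAt (fun t => ρ t - A) D 0 := hρdiff.sub_const A
  -- quadratic remainder has zero derivative
  have hFd : HasDerivAt (fun t => (((ρ t - A) * (ρ t - A)).trace).re) 0 0 := by
    have hmul : HasDerivAt (fun t => (ρ t - A) * (ρ t - A))
        (D * (ρ 0 - A) + (ρ 0 - A) * D) 0 := hδ.mul hδ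
    have hmul' : HasDerivAt (fun t => (ρ t - A) * (ρ t - A)) 0 0 := by
      simpa [hAdef] using hmul
    have := (reTraceMulCLM (1 : Matrix (Fin d) (Fin d) ℂ)).hasFDerivAt.comp_hasDerivAt 0 hmul'
    simpa [Function.comp_def, Matrix.one_mul] using this
  set L0 := cfc (fun x : ℝ => Real.log x + 1) A with hL0def
  have hLin : HasDerivAt (fun t => ((L0 * (ρ t - A)).trace).re) ((L0 * D).trace).re 0 := by
    have := (reTraceMulCLM L0).hasFDerivAt.comp_hasDerivAt 0 hδ
    simpa [Function.comp_def] using this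
  -- the remainder term
  set r : ℝ → ℝ := fun t => traceEnt (ρ t) - traceEnt A - ((L0 * (ρ t - A)).trace).re
    with hrdef
  have hr0 : r 0 = 0 := by simp [hrdef, hAdef]
  have hrbound : ∀ᶠ t in nhds (0:ℝ), 0 ≤ r t ∧
      r t ≤ ε⁻¹ * (((ρ t - A) * (ρ t - A)).trace).re := by
    refine hρd.mono fun t ht => ?_
    exact key_sandwich h0.1 ht.1 hε hεle
  have hF0 : (((ρ 0 - A) * (ρ 0 - A)).trace).re = 0 := by simp [hAdef]
  have hrderiv : HasDerivAt r 0 0 := by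
    rw [hasDerivAt_iff_tendsto_slope]
    have hFs : Tendsto (slope (fun t => (((ρ t - A) * (ρ t - A)).trace).re) 0)
        (nhdsWithin 0 {(0:ℝ)}ᶜ) (nhds 0) := by
      simpa using hasDerivAt_iff_tendsto_slope.mp hFd
    refine squeeze_zero_norm' ?_ (by simpa using (hFs.norm.const_mul ε⁻¹))
    have hmem : ∀ᶠ t in nhdsWithin 0 {(0:ℝ)}ᶜ, (0 ≤ r t ∧
        r t ≤ ε⁻¹ * (((ρ t - A) * (ρ t - A)).trace).re) ∧ t ≠ 0 := by
      refine Filter.Eventually.and (hrbound.filter_mono nhdsWithin_le_nhds) ?_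
      exact eventually_mem_nhdsWithin.mono fun t ht => ht
    refine hmem.mono fun t ⟨⟨h1, h2⟩, ht0⟩ => ?_
    have habs : 0 < |t| := abs_pos.mpr ht0
    have hFt : 0 ≤ (((ρ t - A) * (ρ t - A)).trace).re := by
      rcases le_or_gt 0 ((((ρ t - A) * (ρ t - A)).trace).re) with h | h
      · exact h
      · exfalso
        have h3 : ε⁻¹ * (((ρ t - A) * (ρ t - A)).trace).re < 0 :=
          mul_neg_of_pos_of_neg (inv_pos.mpr hε) h
        exact absurd (h1.trans h2) (not_le.mpr h3)
    have hslope_r : slope r 0 t = r t / t := by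
      rw [slope_def_field, hr0, sub_zero, sub_zero]
    have hslope_F : slope (fun u => (((ρ u - A) * (ρ u - A)).trace).re) 0 t
        = (((ρ t - A) * (ρ t - A)).trace).re / t := by
      rw [slope_def_field, hF0, sub_zero, sub_zero]
    rw [hslope_r, hslope_F, Real.norm_eq_abs, abs_div, abs_div,
      abs_of_nonneg h1, abs_of_nonneg hFt]
    calc r t / |t| ≤ (ε⁻¹ * (((ρ t - A) * (ρ t - A)).trace).re) / |t| := by gcongr
      _ = ε⁻¹ * ((((ρ t - A) * (ρ t - A)).trace).re / |t|) := mul_div_assoc _ _ _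
  -- derivative of t ↦ traceEnt (ρ t)
  have hTE : HasDerivAt (fun t => traceEnt (ρ t)) ((L0 * D).trace).re 0 := by
    have heq : (fun t => traceEnt (ρ t))
        = fun t => (traceEnt A + ((L0 * (ρ t - A)).trace).re) + r t := by
      funext t
      simp [hrdef]
    rw [heq]
    have := ((hasDerivAt_const (0:ℝ) (traceEnt A)).add hLin).add hrderiv
    simpa [Pi.add_def] using this
  -- derivative of the σ-term
  have hσd : HasDerivAt (fun t => ((ρ t * mlog σ).trace).re) ((D * mlog σ).trace).re 0 := by
    have := (reMulTraceCLM (mlog σ)).hasFDerivAt.comp_hasDerivAt 0 hρdiff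
    simpa [Function.comp_def] using this
  have hmain := hTE.sub hσd
  have hval : ((L0 * D).trace).re - ((D * mlog σ).trace).re
      = ((D * (mlog A - mlog σ)).trace).re := by
    have hL0' : L0 = mlog A + 1 := by
      rw [hL0def, cfc_add A Real.log (fun _ : ℝ => 1) (contOn _ A) (contOn _ A),
        cfc_const 1 A hAsa, map_one]
      rfl
    have h1 : (L0 * D).trace = (D * mlog A).trace + D.trace := by
      rw [hL0', Matrix.add_mul, Matrix.one_mul, Matrix.trace_add,
        Matrix.trace_mul_comm]
    have h2 : (D * (mlog A - mlog σ)).trace = (D * mlog A).trace - (D * mlog σ).trace := by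
      rw [Matrix.mul_sub, Matrix.trace_sub]
    rw [h1, h2, htr0]
    simp [Complex.add_re, Complex.sub_re]
  rw [hval] at hmain
  exact hmain
end
end

section
/- Let p ∈ [0,1] and let L be a seminorm on M_2 (the 2×2 complex matrices) satisfying L(c·1) = 0 for every scalar c. Then for every positive definite 2×2 density matrix ρ, L( log( (1−p)·ρ + (p/2)·1 ) ) ≤ (1−p) · L( log ρ ), where log is the spectral functional-calculus logarithm. Equivalently, the qubit depolarizing channel Φ_{p,2}(ρ) = (1−p)ρ + (p/2)·tr(ρ)·1 satisfies L(log Φ_{p,2}(ρ)) ≤ (1−p)·L(log ρ) for every full-rank qubit state ρ. The underlying scalar fact is: for all x ∈ (−1/2, 1/2), |log(1+2(1−p)x) − log(1−2(1−p)x)| ≤ (1−p)·|log(1+2x) − log(1−2x)|. -/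
open scoped ENNReal NNReal ComplexOrder Matrix Matrix.Norms.L2Operator

noncomputable section

private lemma Fderiv : ∀ y ∈ Set.Ioo (-(1/2):ℝ) (1/2),
    HasDerivAt (fun y => Real.log (1+2*y) - Real.log (1-2*y)) (4/(1-4*y^2)) y := by
  intro y hy
  have h1 : (0:ℝ) < 1 + 2*y := by linarith [hy.1]
  have h2 : (0:ℝ) < 1 - 2*y := by linarith [hy.2]
  have d1 : HasDerivAt (fun y:ℝ => 1+2*y) 2 y := by
    simpa using ((hasDerivAt_id y).const_mul 2).const_add 1
  have d2 : HasDerivAt (fun y:ℝ => 1-2*y) (-2) y := by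
    simpa using ((hasDerivAt_id y).const_mul 2).const_sub 1
  have l1 : HasDerivAt (fun y:ℝ => Real.log (1+2*y)) ((1+2*y)⁻¹ * 2) y :=
    (Real.hasDerivAt_log h1.ne').comp (h₂ := Real.log) y d1
  have l2 : HasDerivAt (fun y:ℝ => Real.log (1-2*y)) ((1-2*y)⁻¹ * (-2)) y :=
    (Real.hasDerivAt_log h2.ne').comp (h₂ := Real.log) y d2
  have := l1.sub l2
  refine this.congr_deriv ?_
  have h3 : 1 - 4*y^2 = (1+2*y)*(1-2*y) := by ring
  rw [h3]
  field_simp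
  ring

private lemma Fconvex : ConvexOn ℝ (Set.Ico (0:ℝ) (1/2))
    (fun y => Real.log (1+2*y) - Real.log (1-2*y)) := by
  have hsub : Set.Ico (0:ℝ) (1/2) ⊆ Set.Ioo (-(1/2):ℝ) (1/2) := fun y hy =>
    ⟨by linarith [hy.1], hy.2⟩
  have hderiv : ∀ y ∈ Set.Ico (0:ℝ) (1/2),
      deriv (fun y => Real.log (1+2*y) - Real.log (1-2*y)) y = 4/(1-4*y^2) :=
    fun y hy => (Fderiv y (hsub hy)).deriv
  refine MonotoneOn.convexOn_of_deriv (convex_Ico _ _)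
    (fun y hy => (Fderiv y (hsub hy)).continuousAt.continuousWithinAt)
    ?_ ?_
  · rw [interior_Ico]
    exact fun y hy => ((Fderiv y (hsub (Set.Ioo_subset_Ico_self hy))).differentiableAt).differentiableWithinAt
  · rw [interior_Ico]
    intro a ha b hb hab
    rw [hderiv a (Set.Ioo_subset_Ico_self ha), hderiv b (Set.Ioo_subset_Ico_self hb)]
    have h1 : (0:ℝ) < 1 - 4*b^2 := by nlinarith [hb.1, hb.2]
    have h2 : 1 - 4*b^2 ≤ 1 - 4*a^2 := by nlinarith [ha.1.le, hab]
    exact div_le_div_of_nonneg_left (by norm_num) h1 h2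

private lemma scalar_ineq (q : ℝ) (hq0 : 0 ≤ q) (hq1 : q ≤ 1)
    (x : ℝ) (hx : x ∈ Set.Ioo (-(1/2) : ℝ) (1/2)) :
    |Real.log (1 + 2*(q*x)) - Real.log (1 - 2*(q*x))| ≤
      q * |Real.log (1 + 2*x) - Real.log (1 - 2*x)| := by
  -- first for x in [0, 1/2)
  have key : ∀ x : ℝ, 0 ≤ x → x < 1/2 →
      |Real.log (1 + 2*(q*x)) - Real.log (1 - 2*(q*x))| ≤
        q * |Real.log (1 + 2*x) - Real.log (1 - 2*x)| := by
    intro x hx0 hx1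
    have hqx0 : 0 ≤ q * x := mul_nonneg hq0 hx0
    have hqx1 : q * x < 1/2 := lt_of_le_of_lt (by nlinarith) hx1
    have Fnonneg : ∀ y : ℝ, 0 ≤ y → y < 1/2 →
        0 ≤ Real.log (1 + 2*y) - Real.log (1 - 2*y) := by
      intro y hy0 hy1
      have := Real.log_nonneg (by linarith : (1:ℝ) ≤ 1 + 2*y)
      have := Real.log_nonpos (by linarith) (by linarith : (1:ℝ) - 2*y ≤ 1)
      linarith
    rw [abs_of_nonneg (Fnonneg _ hqx0 hqx1), abs_of_nonneg (Fnonneg _ hx0 hx1)]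
    have hmem : x ∈ Set.Ico (0:ℝ) (1/2) := ⟨hx0, hx1⟩
    have hmem0 : (0:ℝ) ∈ Set.Ico (0:ℝ) (1/2) := ⟨le_refl _, by norm_num⟩
    have := Fconvex.2 hmem hmem0 hq0 (by linarith : (0:ℝ) ≤ 1 - q) (by ring)
    simp only [smul_eq_mul, mul_zero, add_zero] at this
    norm_num at this
    linarith [this]
  rcases le_or_gt 0 x with hx0 | hx0
  · exact key x hx0 hx.2
  · have h := key (-x) (by linarith) (by linarith [hx.1])
    have e1 : 1 + 2*(q*(-x)) = 1 - 2*(q*x) := by ring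
    have e2 : 1 - 2*(q*(-x)) = 1 + 2*(q*x) := by ring
    have e3 : 1 + 2*(-x) = 1 - 2*x := by ring
    have e4 : 1 - 2*(-x) = 1 + 2*x := by ring
    rw [e1, e2, e3, e4, abs_sub_comm, abs_sub_comm (Real.log (1-2*x))] at h
    exact h

-- matrix spectral decomposition for 2x2 hermitian
private lemma cfc_fin_two (ρ : Matrix (Fin 2) (Fin 2) ℂ) (hρ : ρ.IsHermitian) (f : ℝ → ℝ) :
    cfc f ρ = ((f (hρ.eigenvalues 1) : ℂ)) • (1 : Matrix (Fin 2) (Fin 2) ℂ) +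
      (((f (hρ.eigenvalues 0) - f (hρ.eigenvalues 1) : ℝ)) : ℂ) •
        ((hρ.eigenvectorUnitary : Matrix (Fin 2) (Fin 2) ℂ) *
          Matrix.diagonal (Pi.single 0 1) *
          star (hρ.eigenvectorUnitary : Matrix (Fin 2) (Fin 2) ℂ)) := by
  have hUUs : (hρ.eigenvectorUnitary : Matrix (Fin 2) (Fin 2) ℂ) *
      star (hρ.eigenvectorUnitary : Matrix (Fin 2) (Fin 2) ℂ) = 1 :=
    Unitary.mul_star_self_of_mem hρ.eigenvectorUnitary.prop
  rw [hρ.cfc_eq, Matrix.IsHermitian.cfc, Unitary.conjStarAlgAut_apply]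
  have hdiag : Matrix.diagonal (RCLike.ofReal ∘ f ∘ hρ.eigenvalues) =
      ((f (hρ.eigenvalues 1) : ℂ)) • (1 : Matrix (Fin 2) (Fin 2) ℂ) +
      (((f (hρ.eigenvalues 0) - f (hρ.eigenvalues 1) : ℝ)) : ℂ) •
        Matrix.diagonal (Pi.single 0 1) := by
    ext i j
    fin_cases i <;> fin_cases j <;>
      simp [Matrix.diagonal_apply, Matrix.one_apply, Pi.single_apply] <;>
        push_cast <;> ring
  rw [hdiag]
  simp only [Matrix.mul_add, Matrix.add_mul, Matrix.mul_smul, Matrix.smul_mul, Matrix.mul_one]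
  rw [hUUs]

private lemma L_eval (L : Matrix (Fin 2) (Fin 2) ℂ → ℝ)
    (hL_add : ∀ x y, L (x + y) ≤ L x + L y)
    (hL_smul : ∀ (c : ℂ) (x), L (c • x) = ‖c‖ * L x)
    (hL_scalar : ∀ c : ℂ, L (c • (1 : Matrix (Fin 2) (Fin 2) ℂ)) = 0)
    (c : ℂ) (d : ℝ) (M : Matrix (Fin 2) (Fin 2) ℂ) :
    L (c • 1 + ((d:ℂ)) • M) = |d| * L M := by
  apply le_antisymm
  · calc L (c • 1 + (d:ℂ) • M) ≤ L (c • 1) + L ((d:ℂ) • M) := hL_add _ _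
      _ = |d| * L M := by rw [hL_scalar, hL_smul, Complex.norm_real, Real.norm_eq_abs, zero_add]
  · calc |d| * L M = L ((d:ℂ) • M) := by rw [hL_smul, Complex.norm_real, Real.norm_eq_abs]
      _ = L ((c • 1 + (d:ℂ) • M) + (-c) • 1) := by congr 1; module
      _ ≤ L (c • 1 + (d:ℂ) • M) + L ((-c) • 1) := hL_add _ _
      _ = L (c • 1 + (d:ℂ) • M) := by rw [hL_scalar, add_zero]

/-- For the qubit depolarizing channel and any seminorm `L` on `M_2`
vanishing on scalar multiples of the identity:
`L(log((1−p)ρ + (p/2)·1)) ≤ (1−p)·L(log ρ)` for every positive definite qubit density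
matrix `ρ`, together with the underlying scalar inequality. -/
theorem depolarizing_log_lipschitz (p : ℝ) (hp : p ∈ Set.Icc (0 : ℝ) 1)
    (L : Matrix (Fin 2) (Fin 2) ℂ → ℝ)
    (hL_nonneg : ∀ x, 0 ≤ L x)
    (hL_add : ∀ x y, L (x + y) ≤ L x + L y)
    (hL_smul : ∀ (c : ℂ) (x), L (c • x) = ‖c‖ * L x)
    (hL_scalar : ∀ c : ℂ, L (c • (1 : Matrix (Fin 2) (Fin 2) ℂ)) = 0) :
    (∀ ρ : Matrix (Fin 2) (Fin 2) ℂ, ρ.PosDef → ρ.trace = 1 →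
      L (mlog ((1 - p) • ρ + (p / 2) • (1 : Matrix (Fin 2) (Fin 2) ℂ))) ≤
        (1 - p) * L (mlog ρ)) ∧
    (∀ x : ℝ, x ∈ Set.Ioo (-(1/2) : ℝ) (1/2) →
      |Real.log (1 + 2*(1-p)*x) - Real.log (1 - 2*(1-p)*x)| ≤
        (1 - p) * |Real.log (1 + 2*x) - Real.log (1 - 2*x)|) := by
  obtain ⟨hp0, hp1⟩ := hp
  have hq0 : (0:ℝ) ≤ 1 - p := by linarith
  have hq1 : (1:ℝ) - p ≤ 1 := by linarith
  have scalar : ∀ x : ℝ, x ∈ Set.Ioo (-(1/2) : ℝ) (1/2) →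
      |Real.log (1 + 2*(1-p)*x) - Real.log (1 - 2*(1-p)*x)| ≤
        (1 - p) * |Real.log (1 + 2*x) - Real.log (1 - 2*x)| := by
    intro x hx
    have := scalar_ineq (1-p) hq0 hq1 x hx
    simpa [mul_assoc] using this
  refine ⟨?_, scalar⟩
  intro ρ hρ htr
  have hH : ρ.IsHermitian := hρ.1
  have hsa : IsSelfAdjoint ρ := hH
  set μ : Fin 2 → ℝ := hH.eigenvalues with hμ
  have hμpos : ∀ i, 0 < μ i := fun i => hρ.eigenvalues_pos i
  -- trace = sum of eigenvalues
  have hUsU : star (hH.eigenvectorUnitary : Matrix (Fin 2) (Fin 2) ℂ) *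
      (hH.eigenvectorUnitary : Matrix (Fin 2) (Fin 2) ℂ) = 1 :=
    Unitary.star_mul_self_of_mem hH.eigenvectorUnitary.prop
  have htrsum : μ 0 + μ 1 = 1 := by
    have hs := hH.spectral_theorem
    have : ρ.trace = (Matrix.diagonal (RCLike.ofReal ∘ μ) : Matrix (Fin 2) (Fin 2) ℂ).trace := by
      conv_lhs => rw [hs]
      rw [Unitary.conjStarAlgAut_apply, Matrix.trace_mul_cycle, hUsU, Matrix.one_mul]
    rw [htr] at this
    have h2 : (Matrix.diagonal (RCLike.ofReal ∘ μ) : Matrix (Fin 2) (Fin 2) ℂ).trace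
        = ((μ 0 + μ 1 : ℝ) : ℂ) := by
      simp [Matrix.trace, Matrix.diagonal, Fin.sum_univ_two]
    rw [h2] at this
    exact_mod_cast this.symm
  set x : ℝ := μ 0 - 1/2 with hxdef
  have hx : x ∈ Set.Ioo (-(1/2):ℝ) (1/2) := by
    constructor
    · have := hμpos 0; simp only [hxdef]; linarith
    · have := hμpos 1; simp only [hxdef]; linarith
  obtain ⟨hx1, hx2⟩ := Set.mem_Ioo.mp hx
  have hμ0 : μ 0 = (1 + 2*x)/2 := by rw [hxdef]; ring
  have hμ1 : μ 1 = (1 - 2*x)/2 := by rw [hxdef]; linarith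
  clear_value x
  -- positivity of the shifted function
  have hgpos : ∀ t : ℝ, 0 < t → 0 < (1-p)*t + p/2 := by
    intro t ht
    rcases eq_or_lt_of_le hp0 with h | h
    · rw [← h]; simpa using ht
    · have : 0 ≤ (1-p)*t := mul_nonneg hq0 ht.le
      linarith
  -- depolarized matrix as cfc
  have hcfc_g : cfc (fun t : ℝ => (1-p)*t + p/2) ρ
      = (1 - p) • ρ + (p / 2) • (1 : Matrix (Fin 2) (Fin 2) ℂ) := by
    rw [cfc_add ρ (fun t => (1-p)*t) (fun _ => p/2) (by fun_prop) (by fun_prop),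
      cfc_const_mul (1-p) (fun t : ℝ => t) ρ (by fun_prop), cfc_id' ℝ ρ,
      cfc_const (p/2) ρ, Algebra.algebraMap_eq_smul_one]
  have hg : ContinuousOn Real.log ((fun t : ℝ => (1-p)*t + p/2) '' spectrum ℝ ρ) := by
    apply Real.continuousOn_log.mono
    rintro - ⟨t, ht, rfl⟩
    rw [hH.spectrum_real_eq_range_eigenvalues] at ht
    obtain ⟨i, rfl⟩ := ht
    simp only [Set.mem_compl_iff, Set.mem_singleton_iff]
    exact (hgpos _ (hμpos i)).ne'
  have hcomp : mlog ((1 - p) • ρ + (p / 2) • (1 : Matrix (Fin 2) (Fin 2) ℂ))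
      = cfc (Real.log ∘ fun t : ℝ => (1-p)*t + p/2) ρ := by
    rw [mlog, ← hcfc_g]
    exact (cfc_comp Real.log (fun t : ℝ => (1-p)*t + p/2) ρ hsa hg (by fun_prop)).symm
  set U : Matrix (Fin 2) (Fin 2) ℂ := (hH.eigenvectorUnitary : Matrix (Fin 2) (Fin 2) ℂ)
  set P : Matrix (Fin 2) (Fin 2) ℂ := U * Matrix.diagonal (Pi.single 0 1) * star U with hP
  have hlog : L (mlog ρ) = |Real.log (μ 0) - Real.log (μ 1)| * L P := by
    rw [mlog, cfc_fin_two ρ hH Real.log]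
    exact L_eval L hL_add hL_smul hL_scalar _ _ _
  have hlog2 : L (mlog ((1 - p) • ρ + (p / 2) • (1 : Matrix (Fin 2) (Fin 2) ℂ)))
      = |Real.log ((1-p)*(μ 0) + p/2) - Real.log ((1-p)*(μ 1) + p/2)| * L P := by
    rw [hcomp, cfc_fin_two ρ hH (Real.log ∘ fun t : ℝ => (1-p)*t + p/2)]
    exact L_eval L hL_add hL_smul hL_scalar _ _ _
  rw [hlog, hlog2]
  have logdiff : ∀ a b : ℝ, 0 < a → 0 < b →
      Real.log (a/2) - Real.log (b/2) = Real.log a - Real.log b := by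
    intro a b ha hb
    rw [Real.log_div ha.ne' two_ne_zero, Real.log_div hb.ne' two_ne_zero]
    ring
  have e1 : Real.log (μ 0) - Real.log (μ 1) = Real.log (1+2*x) - Real.log (1-2*x) := by
    rw [hμ0, hμ1, logdiff _ _ (by linarith) (by linarith)]
  have e2 : Real.log ((1-p)*(μ 0) + p/2) - Real.log ((1-p)*(μ 1) + p/2)
      = Real.log (1+2*(1-p)*x) - Real.log (1-2*(1-p)*x) := by
    have g0 : (1-p)*(μ 0) + p/2 = (1+2*(1-p)*x)/2 := by rw [hμ0]; ring
    have g1 : (1-p)*(μ 1) + p/2 = (1-2*(1-p)*x)/2 := by rw [hμ1]; ring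
    have p0 : (0:ℝ) < 1+2*(1-p)*x := by
      have := hgpos _ (hμpos 0); rw [g0] at this; linarith
    have p1 : (0:ℝ) < 1-2*(1-p)*x := by
      have := hgpos _ (hμpos 1); rw [g1] at this; linarith
    rw [g0, g1, logdiff _ _ p0 p1]
  rw [e1, e2]
  calc |Real.log (1+2*(1-p)*x) - Real.log (1-2*(1-p)*x)| * L P
      ≤ ((1-p) * |Real.log (1+2*x) - Real.log (1-2*x)|) * L P :=
        mul_le_mul_of_nonneg_right (scalar x hx) (hL_nonneg P)
    _ = (1-p) * (|Real.log (1+2*x) - Real.log (1-2*x)| * L P) := by ring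

end
end

section
/- For every p ∈ [0,1] and every 2×2 density matrix ρ, D( (1−p)·ρ + (p/2)·1 ∥ (1/2)·1 ) ≤ (1−p)² · D( ρ ∥ (1/2)·1 ). That is, the entropy contraction coefficient of the qubit depolarizing channel Φ_{p,2}(ρ) = (1−p)ρ + (p/2)·tr(ρ)·1 with respect to its fixed point, the maximally mixed state (1/2)·1, satisfies η^D(Φ_{p,2}, 1/2) ≤ (1−p)². -/
open scoped ENNReal NNReal ComplexOrder Matrix Matrix.Norms.L2Operator

noncomputable section

namespace DepolAux

/-! ### Scalar part -/

/-- `F t = ((1+t)log(1+t) + (1−t)log(1−t))/2`, binary relative entropy in symmetric coords. -/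
def F (t : ℝ) : ℝ := ((1 + t) * Real.log (1 + t) + (1 - t) * Real.log (1 - t)) / 2

lemma F_continuous : Continuous F := by
  unfold F
  have h := Real.continuous_mul_log
  fun_prop

lemma F_zero : F 0 = 0 := by simp [F]

lemma F_even (t : ℝ) : F (-t) = F t := by
  unfold F; ring_nf

lemma F_hasDerivAt {t : ℝ} (h1 : -1 < t) (h2 : t < 1) :
    HasDerivAt F ((Real.log (1 + t) - Real.log (1 - t)) / 2) t := by
  have hp : (1 : ℝ) + t ≠ 0 := by linarith
  have hm : (1 : ℝ) - t ≠ 0 := by linarith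
  have ha : HasDerivAt (fun s : ℝ => (1 + s) * Real.log (1 + s)) (Real.log (1 + t) + 1) t := by
    have := (Real.hasDerivAt_mul_log hp).comp t ((hasDerivAt_id t).const_add 1)
    simpa [Function.comp_def] using this
  have hb : HasDerivAt (fun s : ℝ => (1 - s) * Real.log (1 - s)) (-(Real.log (1 - t) + 1)) t := by
    have := (Real.hasDerivAt_mul_log hm).comp t ((hasDerivAt_id t).neg.const_add 1)
    simpa [mul_comm, Function.comp_def] using this
  have : HasDerivAt F ((Real.log (1 + t) + 1 + -(Real.log (1 - t) + 1)) / 2) t :=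
    ((ha.add hb).div_const 2)
  convert this using 1
  ring

/-- `L s = log(1+s) − log(1−s) = 2 artanh s`. -/
def L (s : ℝ) : ℝ := Real.log (1 + s) - Real.log (1 - s)

lemma L_zero : L 0 = 0 := by simp [L]

lemma L_hasDerivAt {s : ℝ} (h1 : -1 < s) (h2 : s < 1) :
    HasDerivAt L ((1 + s)⁻¹ + (1 - s)⁻¹) s := by
  have hp : (1 : ℝ) + s ≠ 0 := by linarith
  have hm : (1 : ℝ) - s ≠ 0 := by linarith
  have ha : HasDerivAt (fun x : ℝ => Real.log (1 + x)) (1 + s)⁻¹ s := by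
    have := (Real.hasDerivAt_log hp).comp s ((hasDerivAt_id s).const_add 1)
    simpa [Function.comp_def] using this
  have hb : HasDerivAt (fun x : ℝ => Real.log (1 - x)) (-(1 - s)⁻¹) s := by
    have := (Real.hasDerivAt_log hm).comp s ((hasDerivAt_id s).neg.const_add 1)
    simpa [mul_comm, Function.comp_def] using this
  have := ha.sub hb
  rw [sub_neg_eq_add] at this
  exact this

lemma L_continuousOn : ContinuousOn L (Set.Ico (0:ℝ) 1) := by
  apply ContinuousOn.sub
  · apply ContinuousOn.log (by fun_prop)
    intro x hx; simp only [Set.mem_Ico] at hx; intro h; linarith [hx.1]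
  · apply ContinuousOn.log (by fun_prop)
    intro x hx; simp only [Set.mem_Ico] at hx; intro h; linarith [hx.2]

/-- L' is monotone: for `0 ≤ a ≤ b < 1`, `L'(a) ≤ L'(b)`. -/
lemma Lderiv_mono {a b : ℝ} (ha : 0 ≤ a) (hab : a ≤ b) (hb : b < 1) :
    (1 + a)⁻¹ + (1 - a)⁻¹ ≤ (1 + b)⁻¹ + (1 - b)⁻¹ := by
  have h1a : (0:ℝ) < 1 + a := by linarith
  have h1b : (0:ℝ) < 1 + b := by linarith
  have h2a : (0:ℝ) < 1 - a := by linarith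
  have h2b : (0:ℝ) < 1 - b := by linarith
  have e1 : (1 + a)⁻¹ + (1 - a)⁻¹ = 2 / ((1+a)*(1-a)) := by
    field_simp; ring
  have e2 : (1 + b)⁻¹ + (1 - b)⁻¹ = 2 / ((1+b)*(1-b)) := by
    field_simp; ring
  rw [e1, e2]
  apply div_le_div_of_nonneg_left (by norm_num) (by nlinarith) (by nlinarith)

/-- Key: `L(q·x) ≤ q·L(x)` for `q ∈ [0,1]`, `x ∈ [0,1)`. -/
lemma L_subhom {q x : ℝ} (hq0 : 0 ≤ q) (hq1 : q ≤ 1) (hx0 : 0 ≤ x) (hx1 : x < 1) :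
    L (q * x) ≤ q * L x := by
  set ψ : ℝ → ℝ := fun t => q * L t - L (q * t) with hψ
  have hmono : MonotoneOn ψ (Set.Ico (0:ℝ) 1) := by
    apply monotoneOn_of_deriv_nonneg (convex_Ico 0 1)
    · apply ContinuousOn.sub (continuousOn_const.mul L_continuousOn)
      apply L_continuousOn.comp (by fun_prop)
      intro y hy; simp only [Set.mem_Ico] at hy ⊢
      exact ⟨mul_nonneg hq0 hy.1, by nlinarith [hy.1, hy.2]⟩
    · intro t ht
      rw [interior_Ico] at ht
      obtain ⟨ht0, ht1⟩ := ht
      have h1 : HasDerivAt ψ (q * ((1 + t)⁻¹ + (1 - t)⁻¹) - ((1 + q*t)⁻¹ + (1 - q*t)⁻¹) * q) t := by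
        have hL1 : HasDerivAt L ((1 + t)⁻¹ + (1 - t)⁻¹) t := L_hasDerivAt (by linarith) ht1
        have hL2 : HasDerivAt (fun t => L (q * t)) (((1 + q*t)⁻¹ + (1 - q*t)⁻¹) * q) t := by
          have hqt1 : q * t < 1 := by nlinarith
          have hqt0 : -1 < q * t := by nlinarith
          have hin : HasDerivAt (fun y : ℝ => q * y) q t := by
            simpa using (hasDerivAt_id t).const_mul q
          simpa [Function.comp_def] using (L_hasDerivAt hqt0 hqt1).comp t hin
        exact (hL1.const_mul q).sub hL2
      exact h1.differentiableAt.differentiableWithinAt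
    · intro t ht
      rw [interior_Ico] at ht
      obtain ⟨ht0, ht1⟩ := ht
      have hqt1 : q * t < 1 := by nlinarith
      have hqt0 : -1 < q * t := by nlinarith
      have h1 : HasDerivAt ψ (q * ((1 + t)⁻¹ + (1 - t)⁻¹) - ((1 + q*t)⁻¹ + (1 - q*t)⁻¹) * q) t := by
        have hL1 : HasDerivAt L ((1 + t)⁻¹ + (1 - t)⁻¹) t := L_hasDerivAt (by linarith) ht1
        have hL2 : HasDerivAt (fun t => L (q * t)) (((1 + q*t)⁻¹ + (1 - q*t)⁻¹) * q) t := by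
          have hin : HasDerivAt (fun y : ℝ => q * y) q t := by
            simpa using (hasDerivAt_id t).const_mul q
          simpa [Function.comp_def] using (L_hasDerivAt hqt0 hqt1).comp t hin
        exact (hL1.const_mul q).sub hL2
      rw [h1.deriv]
      have hmle : q * t ≤ t := by nlinarith
      have := Lderiv_mono (a := q*t) (b := t) (mul_nonneg hq0 ht0.le) hmle ht1
      nlinarith [mul_le_mul_of_nonneg_left this hq0]
  have h0 : ψ 0 = 0 := by simp [hψ, L_zero]
  have := hmono (Set.mem_Ico.2 ⟨le_refl 0, by norm_num⟩) (Set.mem_Ico.2 ⟨hx0, hx1⟩) hx0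
  rw [h0] at this
  simpa [hψ] using this

/-- Main scalar inequality: `F(q·t) ≤ q²·F(t)` for `q, t ∈ [0,1]`. -/
lemma F_contraction {q t : ℝ} (hq0 : 0 ≤ q) (hq1 : q ≤ 1) (ht0 : 0 ≤ t) (ht1 : t ≤ 1) :
    F (q * t) ≤ q ^ 2 * F t := by
  set h : ℝ → ℝ := fun t => q ^ 2 * F t - F (q * t) with hh
  have hmono : MonotoneOn h (Set.Icc (0:ℝ) 1) := by
    apply monotoneOn_of_deriv_nonneg (convex_Icc 0 1)
    · exact ((F_continuous.const_smul (q^2)).sub (F_continuous.comp (continuous_const.mul continuous_id))).continuousOn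
    · intro x hx
      rw [interior_Icc] at hx
      obtain ⟨hx0, hx1⟩ := hx
      have hqx1 : q * x < 1 := by nlinarith
      have hqx0 : -1 < q * x := by nlinarith
      have h1 : HasDerivAt h (q^2 * ((Real.log (1 + x) - Real.log (1 - x)) / 2)
          - ((Real.log (1 + q*x) - Real.log (1 - q*x)) / 2) * q) x := by
        have hF1 := F_hasDerivAt (show -1 < x by linarith) hx1
        have hin : HasDerivAt (fun y : ℝ => q * y) q x := by
          simpa using (hasDerivAt_id x).const_mul q
        have hF2 : HasDerivAt (fun t => F (q * t))
            (((Real.log (1 + q*x) - Real.log (1 - q*x)) / 2) * q) x := by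
          simpa [Function.comp_def] using (F_hasDerivAt hqx0 hqx1).comp x hin
        exact (hF1.const_mul (q^2)).sub hF2
      exact h1.differentiableAt.differentiableWithinAt
    · intro x hx
      rw [interior_Icc] at hx
      obtain ⟨hx0, hx1⟩ := hx
      have hqx1 : q * x < 1 := by nlinarith
      have hqx0 : -1 < q * x := by nlinarith
      have h1 : HasDerivAt h (q^2 * ((Real.log (1 + x) - Real.log (1 - x)) / 2)
          - ((Real.log (1 + q*x) - Real.log (1 - q*x)) / 2) * q) x := by
        have hF1 := F_hasDerivAt (show -1 < x by linarith) hx1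
        have hin : HasDerivAt (fun y : ℝ => q * y) q x := by
          simpa using (hasDerivAt_id x).const_mul q
        have hF2 : HasDerivAt (fun t => F (q * t))
            (((Real.log (1 + q*x) - Real.log (1 - q*x)) / 2) * q) x := by
          simpa [Function.comp_def] using (F_hasDerivAt hqx0 hqx1).comp x hin
        exact (hF1.const_mul (q^2)).sub hF2
      rw [h1.deriv]
      have hL := L_subhom hq0 hq1 (le_of_lt hx0) hx1
      simp only [L] at hL
      nlinarith
  have h0 : h 0 = 0 := by simp [hh, F_zero]
  have := hmono (Set.mem_Icc.2 ⟨le_refl 0, by norm_num⟩) (Set.mem_Icc.2 ⟨ht0, ht1⟩) ht0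
  rw [h0] at this
  simpa [hh] using this

lemma F_contraction' {q t : ℝ} (hq0 : 0 ≤ q) (hq1 : q ≤ 1) (ht : |t| ≤ 1) :
    F (q * t) ≤ q ^ 2 * F t := by
  rcases le_or_gt 0 t with h | h
  · exact F_contraction hq0 hq1 h (by rwa [abs_of_nonneg h] at ht)
  · have h1 : 0 ≤ -t := by linarith
    have h2 : -t ≤ 1 := by rwa [abs_of_neg h] at ht
    have hc := F_contraction hq0 hq1 h1 h2
    rwa [show q * -t = -(q*t) by ring, F_even, F_even] at hc

lemma xlog2x (x : ℝ) : x * Real.log (2*x) = x * Real.log x + x * Real.log 2 := by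
  by_cases hx : x = 0
  · simp [hx]
  · rw [Real.log_mul two_ne_zero hx]; ring

lemma ent_to_F {a b : ℝ} (hab : a + b = 1) :
    a * Real.log a + b * Real.log b + Real.log 2 = F (a - b) := by
  have h2a : 1 + (a - b) = 2*a := by linarith
  have h2b : 1 - (a - b) = 2*b := by linarith
  unfold F
  rw [h2a, h2b]
  have ha := xlog2x a
  have hb := xlog2x b
  have h3 : a * Real.log 2 + b * Real.log 2 = Real.log 2 := by
    rw [← add_mul, hab, one_mul]
  nlinarith [ha, hb, h3]

/-! ### Matrix part -/

open Matrix

lemma trace_cfc' {n : Type*} [Fintype n] [DecidableEq n] {A : Matrix n n ℂ}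
    (hA : A.IsHermitian) (f : ℝ → ℝ) :
    (cfc f A).trace = ∑ i, (f (hA.eigenvalues i) : ℂ) := by
  rw [hA.cfc_eq, Matrix.IsHermitian.cfc, Unitary.conjStarAlgAut_apply, Matrix.trace_mul_cycle,
    Unitary.star_mul_self_of_mem (SetLike.coe_mem _), one_mul, Matrix.trace_diagonal]
  simp [Function.comp]

lemma trace_eq_sum_eigs {n : Type*} [Fintype n] [DecidableEq n] {A : Matrix n n ℂ}
    (hA : A.IsHermitian) : A.trace = ∑ i, (hA.eigenvalues i : ℂ) := by
  conv_lhs => rw [hA.spectral_theorem, Unitary.conjStarAlgAut_apply]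
  rw [Matrix.trace_mul_cycle, Unitary.star_mul_self_of_mem (SetLike.coe_mem _), one_mul,
    Matrix.trace_diagonal]
  simp [Function.comp]

lemma spectrum_conj_diag {n : Type*} [Fintype n] [DecidableEq n]
    (U : unitary (Matrix n n ℂ)) (d : n → ℝ) :
    spectrum ℝ ((U : Matrix n n ℂ) * Matrix.diagonal (RCLike.ofReal ∘ d)
      * star (U : Matrix n n ℂ)) = Set.range d := by
  rw [Unitary.spectrum_star_right_conjugate]
  ext x
  rw [← spectrum.algebraMap_mem_iff ℂ, spectrum_diagonal, RCLike.algebraMap_eq_ofReal]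
  simp

end DepolAux

open DepolAux in
/-- Entropy contraction for the qubit depolarizing channel
`Φ_{p,2}(ρ) = (1−p)ρ + (p/2)·1`: for every `p ∈ [0,1]` and every qubit density matrix
`ρ`, `D(Φ_{p,2}(ρ) ‖ 1/2) ≤ (1−p)²·D(ρ ‖ 1/2)`; i.e. `η^D(Φ_{p,2}, 1/2) ≤ (1−p)²`. -/
theorem depolarizing_entropy_contraction (p : ℝ) (hp : p ∈ Set.Icc (0 : ℝ) 1)
    (ρ : Matrix (Fin 2) (Fin 2) ℂ) (hρ : ρ.PosSemidef) (hρtr : ρ.trace = 1) :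
    relEnt ((1 - p) • ρ + (p / 2) • (1 : Matrix (Fin 2) (Fin 2) ℂ))
        ((1/2 : ℝ) • (1 : Matrix (Fin 2) (Fin 2) ℂ)) ≤
      (1 - p) ^ 2 * relEnt ρ ((1/2 : ℝ) • (1 : Matrix (Fin 2) (Fin 2) ℂ)) := by
  obtain ⟨hp0, hp1⟩ := hp
  set q : ℝ := 1 - p with hq
  have hq0 : 0 ≤ q := by rw [hq]; linarith
  have hq1 : q ≤ 1 := by rw [hq]; linarith
  set σ : Matrix (Fin 2) (Fin 2) ℂ := (1/2 : ℝ) • 1 with hσdef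
  set B : Matrix (Fin 2) (Fin 2) ℂ := q • ρ + (p / 2) • 1 with hBdef
  -- log of σ
  have hmlog : mlog σ = Real.log (1/2) • (1 : Matrix (Fin 2) (Fin 2) ℂ) := by
    unfold mlog
    rw [hσdef, show ((1/2:ℝ) • (1 : Matrix (Fin 2) (Fin 2) ℂ))
        = algebraMap ℝ _ (1/2) from (Algebra.algebraMap_eq_smul_one _).symm,
      cfc_algebraMap, Algebra.algebraMap_eq_smul_one]
  have hterm : ∀ (A : Matrix (Fin 2) (Fin 2) ℂ), A.trace = 1 →
      (A * mlog σ).trace.re = - Real.log 2 := by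
    intro A hA
    rw [hmlog, Matrix.mul_smul, mul_one, Matrix.trace_smul, hA, Complex.real_smul, mul_one,
      Complex.ofReal_re, one_div, Real.log_inv]
  -- spectral data of ρ
  have hH := hρ.1
  set lam := hH.eigenvalues with hlam
  set μ : Fin 2 → ℝ := fun i => q * lam i + p/2 with hμ
  set U := hH.eigenvectorUnitary with hU
  have hUmem := SetLike.coe_mem U
  have hdiag : Matrix.diagonal (RCLike.ofReal ∘ μ : Fin 2 → ℂ) =
      q • Matrix.diagonal (RCLike.ofReal ∘ lam) + (p/2) • (1 : Matrix (Fin 2) (Fin 2) ℂ) := by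
    ext i j
    by_cases hij : i = j
    · subst hij
      simp only [hμ, Matrix.diagonal_apply_eq, Matrix.add_apply, Matrix.smul_apply,
        Matrix.one_apply_eq, Function.comp_apply, Complex.real_smul, smul_eq_mul,
        RCLike.ofReal_alg]
      push_cast
      ring
    · simp [Matrix.diagonal_apply_ne _ hij, Matrix.one_apply_ne hij]
  have hdecomp : B = (U : Matrix (Fin 2) (Fin 2) ℂ) * Matrix.diagonal (RCLike.ofReal ∘ μ)
      * star (U : Matrix (Fin 2) (Fin 2) ℂ) := by
    rw [hBdef, hdiag, Matrix.mul_add, Matrix.add_mul, Matrix.mul_smul, Matrix.smul_mul,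
      Matrix.mul_smul, Matrix.smul_mul, mul_one,
      Unitary.mul_star_self_of_mem hUmem, ← Unitary.conjStarAlgAut_apply (S := ℂ), ← hH.spectral_theorem]
  have hBH : B.IsHermitian := by
    unfold Matrix.IsHermitian
    rw [hBdef]
    simp [Matrix.conjTranspose_add, Matrix.conjTranspose_smul, hρ.1.eq]
  -- traces
  have htrB : B.trace = 1 := by
    rw [hBdef, Matrix.trace_add, Matrix.trace_smul, Matrix.trace_smul, hρtr, Matrix.trace_one]
    simp only [Complex.real_smul, hq, Fintype.card_fin]
    push_cast
    ring
  have hlamsum : lam 0 + lam 1 = 1 := by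
    have h := trace_eq_sum_eigs hH
    rw [hρtr, Fin.sum_univ_two] at h
    exact_mod_cast h.symm
  set ν := hBH.eigenvalues with hν
  have hνsum : ν 0 + ν 1 = 1 := by
    have h := trace_eq_sum_eigs hBH
    rw [htrB, Fin.sum_univ_two] at h
    exact_mod_cast h.symm
  have hrange : Set.range ν = Set.range μ := by
    rw [hν, ← Matrix.IsHermitian.spectrum_real_eq_range_eigenvalues hBH, hdecomp,
      spectrum_conj_diag]
  -- traceEnt values
  have hTρ : traceEnt ρ = lam 0 * Real.log (lam 0) + lam 1 * Real.log (lam 1) := by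
    unfold traceEnt
    rw [trace_cfc' hH, Fin.sum_univ_two]
    simp [hlam]
  have hTB : traceEnt B = ν 0 * Real.log (ν 0) + ν 1 * Real.log (ν 1) := by
    unfold traceEnt
    rw [trace_cfc' hBH, Fin.sum_univ_two]
    simp [hν]
  -- relEnt values
  have hRρ : relEnt ρ σ = traceEnt ρ + Real.log 2 := by
    unfold relEnt; rw [hterm ρ hρtr]; ring
  have hRB : relEnt B σ = traceEnt B + Real.log 2 := by
    unfold relEnt; rw [hterm B htrB]; ring
  rw [hRρ, hRB, hTρ, hTB]
  -- reduce to scalar inequality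
  have h0 : 0 ≤ lam 0 := hρ.eigenvalues_nonneg 0
  have h1 : 0 ≤ lam 1 := hρ.eigenvalues_nonneg 1
  set t : ℝ := lam 0 - lam 1 with ht
  have hFρ : lam 0 * Real.log (lam 0) + lam 1 * Real.log (lam 1) + Real.log 2 = F t :=
    ent_to_F hlamsum
  have hμs : μ 0 + μ 1 = 1 := by
    have h : q * lam 0 + q * lam 1 = q := by rw [← mul_add, hlamsum, mul_one]
    simp only [hμ]
    rw [hq] at h ⊢
    linarith
  have hμdiff : μ 0 - μ 1 = q * t := by simp only [hμ, ht]; ring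
  obtain ⟨j, hj⟩ : ν 0 ∈ Set.range μ := by rw [← hrange]; exact ⟨0, rfl⟩
  have hν1 : ν 1 = 1 - ν 0 := by linarith
  have hkey : ν 0 * Real.log (ν 0) + ν 1 * Real.log (ν 1) + Real.log 2 = F (q * t) := by
    fin_cases j
    · have e0 : ν 0 = μ 0 := hj.symm
      have e1 : ν 1 = μ 1 := by rw [hν1, e0]; linarith
      rw [e0, e1, ent_to_F hμs, hμdiff]
    · have e0 : ν 0 = μ 1 := hj.symm
      have e1 : ν 1 = μ 0 := by rw [hν1, e0]; linarith
      rw [e0, e1, ent_to_F (by linarith : μ 1 + μ 0 = 1),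
        show μ 1 - μ 0 = -(q*t) by linarith, F_even]
  have habs : |t| ≤ 1 := by rw [ht, abs_le]; constructor <;> linarith
  calc ν 0 * Real.log (ν 0) + ν 1 * Real.log (ν 1) + Real.log 2 = F (q * t) := hkey
    _ ≤ q ^ 2 * F t := F_contraction' hq0 hq1 habs
    _ = q ^ 2 * (lam 0 * Real.log (lam 0) + lam 1 * Real.log (lam 1) + Real.log 2) := by
        rw [hFρ]

end
end

section
/- Let L be a Lipschitz seminorm on M_d, let Φ : M_d → M_d be a unital completely positive map, and let E : M_d → M_d be a Hermitian-preserving linear map satisfying Φ ∘ E = E ∘ Φ = E. Assume Cost_L(E) < ∞. Then Cost_L(Φ) ≥ (1 − Lip_L(Φ)) · Cost_L(E). (The inequality is trivial when Lip_L(Φ) ≥ 1; the content is that a strict Lipschitz contraction forces the transportation cost of Φ to be at least a fixed fraction of the cost of E.) -/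
open scoped ENNReal NNReal ComplexOrder Matrix Matrix.Norms.L2Operator Kronecker

noncomputable section

section AuxSection

variable {ι : Type*} [Fintype ι] [DecidableEq ι]

lemma IsUCP.posMap {Φ : Matrix ι ι ℂ → Matrix ι ι ℂ} (hΦ : IsUCP Φ)
    {y : Matrix ι ι ℂ} (hy : y.PosSemidef) : (Φ y).PosSemidef := by
  have h1 : ((y.submatrix Prod.snd Prod.snd :
      Matrix (Fin 1 × ι) (Fin 1 × ι) ℂ)).PosSemidef := hy.submatrix _
  have h2 := hΦ.cp 1 _ h1
  have h3 := h2.submatrix (fun i : ι => ((0 : Fin 1), i))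
  have h4 : (ampFun Φ 1 (y.submatrix Prod.snd Prod.snd)).submatrix
      (fun i : ι => ((0 : Fin 1), i)) (fun i : ι => ((0 : Fin 1), i)) = Φ y := rfl
  rwa [h4] at h3

lemma exists_posSemidef_sub {x : Matrix ι ι ℂ} (hx : x.IsHermitian) :
    ∃ p q : Matrix ι ι ℂ, p.PosSemidef ∧ q.PosSemidef ∧ x = p - q := by
  set U : Matrix ι ι ℂ := (hx.eigenvectorUnitary : Matrix ι ι ℂ) with hU
  refine ⟨U * Matrix.diagonal (fun i => ((max (hx.eigenvalues i) 0 : ℝ) : ℂ)) * star U,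
          U * Matrix.diagonal (fun i => ((max (-hx.eigenvalues i) 0 : ℝ) : ℂ)) * star U,
          ?_, ?_, ?_⟩
  · rw [Matrix.star_eq_conjTranspose]
    exact (Matrix.PosSemidef.diagonal fun i => by
      simpa using Complex.zero_le_real.mpr (le_max_right _ _)).mul_mul_conjTranspose_same U
  · rw [Matrix.star_eq_conjTranspose]
    exact (Matrix.PosSemidef.diagonal fun i => by
      simpa using Complex.zero_le_real.mpr (le_max_right _ _)).mul_mul_conjTranspose_same U
  · have hdiag : Matrix.diagonal (fun i => ((max (hx.eigenvalues i) 0 : ℝ) : ℂ))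
        - Matrix.diagonal (fun i => ((max (-hx.eigenvalues i) 0 : ℝ) : ℂ))
        = Matrix.diagonal (RCLike.ofReal ∘ hx.eigenvalues) := by
      rw [Matrix.diagonal_sub]
      refine congrArg Matrix.diagonal (funext fun i => ?_)
      show ((max (hx.eigenvalues i) 0 : ℝ) : ℂ) - ((max (-hx.eigenvalues i) 0 : ℝ) : ℂ)
          = ((hx.eigenvalues i : ℝ) : ℂ)
      rw [← Complex.ofReal_sub, Complex.ofReal_inj]
      rcases le_total 0 (hx.eigenvalues i) with h | h
      · rw [max_eq_left h, max_eq_right (neg_nonpos.mpr h)]; ring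
      · rw [max_eq_right h, max_eq_left (neg_nonneg.mpr h)]; ring
    rw [← sub_mul, ← mul_sub, hdiag, Matrix.star_eq_conjTranspose, ← Matrix.star_eq_conjTranspose]
    exact hx.spectral_theorem

lemma IsUCP.hermMap {Φ : Matrix ι ι ℂ → Matrix ι ι ℂ} (hΦ : IsUCP Φ)
    {x : Matrix ι ι ℂ} (hx : x.IsHermitian) : (Φ x).IsHermitian := by
  obtain ⟨p, q, hp, hq, rfl⟩ := exists_posSemidef_sub hx
  have hsub : Φ (p - q) = Φ p - Φ q := by
    have h := hΦ.map_add p ((-1 : ℂ) • q)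
    rw [hΦ.map_smul] at h
    simpa [sub_eq_add_neg] using h
  rw [hsub]
  exact (hΦ.posMap hp).1.sub (hΦ.posMap hq).1

lemma scale_bound {d : ℕ} (L : Matrix (Fin d) (Fin d) ℂ → ℝ)
    (hL_smul : ∀ (c : ℂ) (x), L (c • x) = ‖c‖ * L x)
    (G : Matrix (Fin d) (Fin d) ℂ → ℝ)
    (hGs : ∀ (c : ℂ) (x), G (c • x) = ‖c‖ * G x)
    (M : ℝ≥0∞) (hM : M ≠ ⊤)
    (hsup : ∀ x : Matrix (Fin d) (Fin d) ℂ, x.IsHermitian → L x ≤ 1 →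
      ENNReal.ofReal (G x) ≤ M)
    (x : Matrix (Fin d) (Fin d) ℂ) (hx : x.IsHermitian) (hLx : 0 ≤ L x) :
    G x ≤ M.toReal * L x := by
  refine le_of_forall_pos_le_add fun δ hδ => ?_
  set m := M.toReal with hm
  have hm0 : 0 ≤ m := ENNReal.toReal_nonneg
  set t : ℝ := L x + δ / (m + 1) with ht
  have ht0 : 0 < t := by positivity
  have hherm : ((((t : ℝ)⁻¹ : ℝ) : ℂ) • x).IsHermitian := by
    unfold Matrix.IsHermitian
    rw [Matrix.conjTranspose_smul, hx.eq]
    norm_num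
  have hnorm : ‖(((t : ℝ)⁻¹ : ℝ) : ℂ)‖ = t⁻¹ := by
    rw [Complex.norm_real, Real.norm_eq_abs, abs_of_pos (by positivity)]
  have hL1 : L ((((t : ℝ)⁻¹ : ℝ) : ℂ) • x) ≤ 1 := by
    rw [hL_smul, hnorm]
    rw [inv_mul_le_iff₀ ht0, mul_one, ht]
    have : 0 < δ / (m + 1) := by positivity
    linarith
  have hGle : G ((((t : ℝ)⁻¹ : ℝ) : ℂ) • x) ≤ m :=
    (ENNReal.ofReal_le_iff_le_toReal hM).mp (hsup _ hherm hL1)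
  rw [hGs, hnorm] at hGle
  have hGx : G x ≤ m * t := by
    rw [inv_mul_le_iff₀ ht0] at hGle
    linarith [hGle]
  have : m * (δ / (m + 1)) ≤ δ := by
    rw [mul_div_assoc']
    rw [div_le_iff₀ (by positivity)]
    nlinarith
  calc G x ≤ m * t := hGx
    _ = m * L x + m * (δ / (m + 1)) := by rw [ht]; ring
    _ ≤ m * L x + δ := by linarith

end AuxSection

/-- If `Φ` is UCP, `E` is Hermitian-preserving with
`Φ ∘ E = E ∘ Φ = E` and `Cost_L(E) < ∞`, then
`Cost_L(Φ) ≥ (1 - Lip_L(Φ)) · Cost_L(E)` (truncated subtraction in `[0,∞]`). -/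
theorem cost_ge_one_sub_lip_mul_cost {d : ℕ}
    (L : Matrix (Fin d) (Fin d) ℂ → ℝ)
    (hL_nonneg : ∀ x, 0 ≤ L x)
    (hL_add : ∀ x y, L (x + y) ≤ L x + L y)
    (hL_smul : ∀ (c : ℂ) (x), L (c • x) = ‖c‖ * L x)
    (hL_one : L 1 = 0)
    (hL_star : ∀ x, L xᴴ = L x)
    (Φ E : Matrix (Fin d) (Fin d) ℂ → Matrix (Fin d) (Fin d) ℂ)
    (hΦ : IsUCP Φ)
    (hE_lin : ∀ (c : ℂ) (x y), E (c • x + y) = c • E x + E y)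
    (hE_herm : ∀ x, (E x)ᴴ = E xᴴ)
    (hΦE : ∀ x, Φ (E x) = E x)
    (hEΦ : ∀ x, E (Φ x) = E x)
    (hfin : Cost L E ≠ ⊤) :
    (1 - Lip L Φ) * Cost L E ≤ Cost L Φ := by
  rcases le_or_gt 1 (Lip L Φ) with h1 | h1
  · rw [tsub_eq_zero_of_le h1, zero_mul]; exact zero_le
  by_cases hCPtop : Cost L Φ = ⊤
  · rw [hCPtop]; exact le_top
  have hLipne : Lip L Φ ≠ ⊤ := ne_top_of_lt h1
  set l := (Lip L Φ).toReal with hl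
  set CE := (Cost L E).toReal with hCE
  set CP := (Cost L Φ).toReal with hCP
  have hl0 : 0 ≤ l := ENNReal.toReal_nonneg
  have hl1 : l < 1 := by
    rw [hl, ← ENNReal.toReal_one]
    exact ENNReal.toReal_strict_mono (by simp) h1
  have h1l : (0:ℝ) ≤ 1 - l := by linarith
  have hCE0 : 0 ≤ CE := ENNReal.toReal_nonneg
  have hCP0 : 0 ≤ CP := ENNReal.toReal_nonneg
  have hE0 : E 0 = 0 := by
    have h := hE_lin (-1) 0 0
    simpa using h
  have hE_smul : ∀ (c : ℂ) (x), E (c • x) = c • E x := fun c x => by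
    have h := hE_lin c x 0
    rwa [add_zero, hE0, add_zero] at h
  -- scale bounds
  have lipb : ∀ x : Matrix (Fin d) (Fin d) ℂ, x.IsHermitian → L (Φ x) ≤ l * L x := by
    intro x hx
    refine scale_bound L hL_smul (fun y => L (Φ y))
      (fun c y => by show L (Φ (c • y)) = ‖c‖ * L (Φ y); rw [hΦ.map_smul, hL_smul]) _ hLipne ?_ x hx (hL_nonneg x)
    intro y hy hLy
    exact le_iSup₂ (f := fun y (_ : y ∈ {x : Matrix (Fin d) (Fin d) ℂ | x.IsHermitian ∧ L x ≤ 1})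
      => ENNReal.ofReal (L (Φ y))) y ⟨hy, hLy⟩
  have costPb : ∀ x : Matrix (Fin d) (Fin d) ℂ, x.IsHermitian → ‖Φ x - x‖ ≤ CP * L x := by
    intro x hx
    refine scale_bound L hL_smul (fun y => ‖Φ y - y‖)
      (fun c y => by show ‖Φ (c • y) - c • y‖ = ‖c‖ * ‖Φ y - y‖; rw [hΦ.map_smul, ← smul_sub, norm_smul]) _ hCPtop ?_ x hx (hL_nonneg x)
    intro y hy hLy
    exact le_iSup₂ (f := fun y (_ : y ∈ {x : Matrix (Fin d) (Fin d) ℂ | x.IsHermitian ∧ L x ≤ 1})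
      => ENNReal.ofReal ‖Φ y - y‖) y ⟨hy, hLy⟩
  have costEb : ∀ x : Matrix (Fin d) (Fin d) ℂ, x.IsHermitian → ‖E x - x‖ ≤ CE * L x := by
    intro x hx
    refine scale_bound L hL_smul (fun y => ‖E y - y‖)
      (fun c y => by show ‖E (c • y) - c • y‖ = ‖c‖ * ‖E y - y‖; rw [hE_smul, ← smul_sub, norm_smul]) _ hfin ?_ x hx (hL_nonneg x)
    intro y hy hLy
    exact le_iSup₂ (f := fun y (_ : y ∈ {x : Matrix (Fin d) (Fin d) ℂ | x.IsHermitian ∧ L x ≤ 1})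
      => ENNReal.ofReal ‖E y - y‖) y ⟨hy, hLy⟩
  have key : ∀ x : Matrix (Fin d) (Fin d) ℂ, x.IsHermitian → L x ≤ 1 →
      (1 - l) * ‖E x - x‖ ≤ CP := by
    intro x hx hLx
    have hherm : ∀ k, (Φ^[k] x).IsHermitian := by
      intro k; induction k with
      | zero => simpa using hx
      | succ k ih => rw [Function.iterate_succ_apply']; exact hΦ.hermMap ih
    have hLk : ∀ k, L (Φ^[k] x) ≤ l ^ k := by
      intro k; induction k with
      | zero => simpa using hLx
      | succ k ih =>
        rw [Function.iterate_succ_apply', pow_succ']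
        exact (lipb _ (hherm k)).trans (mul_le_mul_of_nonneg_left ih hl0)
    have hEk : ∀ k, E (Φ^[k] x) = E x := by
      intro k; induction k with
      | zero => rfl
      | succ k ih => rw [Function.iterate_succ_apply', hEΦ, ih]
    have tele : ∀ N, ‖x - Φ^[N] x‖ ≤ CP * ∑ k ∈ Finset.range N, l ^ k := by
      intro N; induction N with
      | zero => simp
      | succ N ih =>
        have h2 : ‖Φ^[N] x - Φ^[N + 1] x‖ ≤ CP * l ^ N := by
          rw [Function.iterate_succ_apply', norm_sub_rev]
          exact (costPb _ (hherm N)).trans (mul_le_mul_of_nonneg_left (hLk N) hCP0)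
        have h1 : ‖x - Φ^[N + 1] x‖ ≤ ‖x - Φ^[N] x‖ + ‖Φ^[N] x - Φ^[N + 1] x‖ := by
          calc ‖x - Φ^[N + 1] x‖ = ‖(x - Φ^[N] x) + (Φ^[N] x - Φ^[N + 1] x)‖ := by
                rw [sub_add_sub_cancel]
            _ ≤ _ := norm_add_le _ _
        rw [Finset.sum_range_succ, mul_add]
        linarith
    have main : ∀ N, ‖E x - x‖ ≤ CE * l ^ N + CP * ∑ k ∈ Finset.range N, l ^ k := by
      intro N
      have hE1 : ‖E x - Φ^[N] x‖ ≤ CE * l ^ N := by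
        rw [← hEk N]
        exact (costEb _ (hherm N)).trans (mul_le_mul_of_nonneg_left (hLk N) hCE0)
      calc ‖E x - x‖ = ‖(E x - Φ^[N] x) + (Φ^[N] x - x)‖ := by rw [sub_add_sub_cancel]
        _ ≤ ‖E x - Φ^[N] x‖ + ‖Φ^[N] x - x‖ := norm_add_le _ _
        _ = ‖E x - Φ^[N] x‖ + ‖x - Φ^[N] x‖ := by rw [norm_sub_rev (Φ^[N] x)]
        _ ≤ CE * l ^ N + CP * ∑ k ∈ Finset.range N, l ^ k := add_le_add hE1 (tele N)
    have bnd : ∀ N, (1 - l) * ‖E x - x‖ ≤ (1 - l) * (CE * l ^ N) + CP := by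
      intro N
      have hsum : (1 - l) * ∑ k ∈ Finset.range N, l ^ k = 1 - l ^ N := by
        linear_combination (-1 : ℝ) * geom_sum_mul l N
      calc (1 - l) * ‖E x - x‖
          ≤ (1 - l) * (CE * l ^ N + CP * ∑ k ∈ Finset.range N, l ^ k) :=
            mul_le_mul_of_nonneg_left (main N) h1l
        _ = (1 - l) * (CE * l ^ N) + CP * (1 - l ^ N) := by linear_combination CP * hsum
        _ ≤ (1 - l) * (CE * l ^ N) + CP := by
            nlinarith [mul_nonneg hCP0 (pow_nonneg hl0 N)]
    have hlim : Filter.Tendsto (fun N : ℕ => (1 - l) * (CE * l ^ N) + CP) Filter.atTop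
        (nhds ((1 - l) * (CE * 0) + CP)) :=
      (((tendsto_pow_atTop_nhds_zero_of_lt_one hl0 hl1).const_mul CE).const_mul
        (1 - l)).add_const CP
    have := ge_of_tendsto' hlim bnd
    simpa using this
  have hsub1 : (1 : ℝ≥0∞) - Lip L Φ = ENNReal.ofReal (1 - l) := by
    rw [ENNReal.ofReal_sub _ hl0, ENNReal.ofReal_one, hl, ENNReal.ofReal_toReal hLipne]
  rw [hsub1]
  simp only [Cost]
  rw [ENNReal.mul_iSup]
  refine iSup_le fun x => ?_
  rw [ENNReal.mul_iSup]
  refine iSup_le fun hx => ?_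
  obtain ⟨hherm, hLx⟩ := hx
  calc ENNReal.ofReal (1 - l) * ENNReal.ofReal ‖E x - x‖
      = ENNReal.ofReal ((1 - l) * ‖E x - x‖) := (ENNReal.ofReal_mul h1l).symm
    _ ≤ ENNReal.ofReal CP := ENNReal.ofReal_le_ofReal (key x hherm hLx)
    _ = Cost L Φ := ENNReal.ofReal_toReal hCPtop


end
end
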